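/- arXiv:1210.1952 — 5 statements merged into one kernel-verified Lean document; each statement's English description precedes it below -/
import Mathlib

section
/- For a continuous function f : I → ℝ on an interval, the set M(f) of points y ∈ I at which the graph is monotone (i.e., there exist c ≥ 1 and ε > 0 such that |ψ(x) − ψ(y)| ≤ c|ψ(x) − ψ(z)| for all x ∈ (y−ε, y) ∩ I and z ∈ (y, y+ε) ∩ I) is an F_σ subset of I. -/
/-- The natural parametrization of the graph of `f`, as a map into the Euclidean plane. -/
noncomputable def graphMap (f : ℝ → ℝ) (t : ℝ) : EuclideanSpace ℝ (Fin 2) := WithLp.toLp 2 ![t, f t]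

/-- `y` is an `M`-point of `f` (relative to `I`): the graph of `f` is monotone at `ψ y`. -/
def IsMPoint (f : ℝ → ℝ) (I : Set ℝ) (y : ℝ) : Prop :=
  ∃ c : ℝ, 1 ≤ c ∧ ∃ ε > 0, ∀ x ∈ Set.Ioo (y - ε) y ∩ I, ∀ z ∈ Set.Ioo y (y + ε) ∩ I,
    ‖graphMap f x - graphMap f y‖ ≤ c * ‖graphMap f x - graphMap f z‖

lemma graphMap_contOn (f : ℝ → ℝ) (I : Set ℝ) (hf : ContinuousOn f I) :
    ContinuousOn (graphMap f) I := by
  unfold graphMap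
  refine (PiLp.continuous_toLp 2 (fun _ : Fin 2 => ℝ)).comp_continuousOn (f := fun t => ![t, f t]) ?_
  apply continuousOn_pi.mpr
  intro i
  fin_cases i
  · exact continuousOn_id
  · exact hf

/-- For `f : I → ℝ` continuous on an interval, the set `M(f)` of points of `I` at which
the graph is monotone is an `F_σ` subset of `I` (a countable union of sets closed in `I`). -/
theorem stmt_3 (I : Set ℝ) (hI : I.OrdConnected) (f : ℝ → ℝ) (hf : ContinuousOn f I) :
    ∃ F : ℕ → Set ℝ, (∀ n, ∃ C : Set ℝ, IsClosed C ∧ F n = C ∩ I) ∧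
      {y ∈ I | IsMPoint f I y} = ⋃ n, F n := by
  set F : ℕ → Set ℝ := fun n =>
    {y | y ∈ I ∧ ∀ x ∈ Set.Ioo (y - 1/((n:ℝ)+1)) y ∩ I, ∀ z ∈ Set.Ioo y (y + 1/((n:ℝ)+1)) ∩ I,
      ‖graphMap f x - graphMap f y‖ ≤ ((n:ℝ)+1) * ‖graphMap f x - graphMap f z‖} with hF
  have hnpos : ∀ n : ℕ, (0:ℝ) < (n:ℝ) + 1 := fun n => by positivity
  refine ⟨F, fun n => ⟨closure (F n), isClosed_closure, ?_⟩, ?_⟩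
  · apply Set.Subset.antisymm
    · intro y hy
      exact ⟨subset_closure hy, hy.1⟩
    · rintro y ⟨hyc, hyI⟩
      set δ : ℝ := 1/((n:ℝ)+1) with hδ
      refine ⟨hyI, ?_⟩
      rintro x ⟨hx1, hxI⟩ z ⟨hz1, hzI⟩
      obtain ⟨u, hu, hlim⟩ := mem_closure_iff_seq_limit.mp hyc
      -- eventually the conditions hold for u k
      have h1 : ∀ᶠ k in Filter.atTop, x < u k := hlim.eventually (eventually_gt_nhds hx1.2)
      have h2 : ∀ᶠ k in Filter.atTop, u k < x + δ := by
        refine hlim.eventually (eventually_lt_nhds ?_)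
        linarith [hx1.1]
      have h3 : ∀ᶠ k in Filter.atTop, u k < z := hlim.eventually (eventually_lt_nhds hz1.1)
      have h4 : ∀ᶠ k in Filter.atTop, z - δ < u k := by
        refine hlim.eventually (eventually_gt_nhds ?_)
        linarith [hz1.2]
      have hev : ∀ᶠ k in Filter.atTop,
          ‖graphMap f x - graphMap f (u k)‖ ≤ ((n:ℝ)+1) * ‖graphMap f x - graphMap f z‖ := by
        filter_upwards [h1, h2, h3, h4] with k hk1 hk2 hk3 hk4
        exact (hu k).2 x ⟨⟨by linarith, hk1⟩, hxI⟩ z ⟨⟨hk3, by linarith⟩, hzI⟩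
      -- limit
      have hlim' : Filter.Tendsto u Filter.atTop (nhdsWithin y I) :=
        tendsto_nhdsWithin_of_tendsto_nhds_of_eventually_within u hlim
          (Filter.Eventually.of_forall fun k => (hu k).1)
      have hcont : Filter.Tendsto (fun k => graphMap f (u k)) Filter.atTop
          (nhds (graphMap f y)) :=
        ((graphMap_contOn f I hf y hyI).tendsto).comp hlim'
      have hnorm : Filter.Tendsto (fun k => ‖graphMap f x - graphMap f (u k)‖) Filter.atTop
          (nhds ‖graphMap f x - graphMap f y‖) :=
        (Filter.Tendsto.sub tendsto_const_nhds hcont).norm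
      exact le_of_tendsto hnorm hev
  · ext y
    simp only [Set.mem_setOf_eq, Set.mem_iUnion, hF]
    constructor
    · rintro ⟨hyI, c, hc, ε, hε, H⟩
      obtain ⟨n, hn⟩ := exists_nat_gt (max c (1/ε))
      have hcn : c ≤ (n:ℝ) + 1 := le_of_lt (lt_of_le_of_lt (le_max_left _ _) (by linarith))
      have hδε : 1/((n:ℝ)+1) ≤ ε := by
        rw [div_le_iff₀ (hnpos n)]
        have h1 : 1/ε < (n:ℝ) + 1 := lt_of_le_of_lt (le_max_right _ _) (by linarith)
        rw [div_lt_iff₀ hε] at h1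
        linarith [mul_comm ε ((n:ℝ)+1)]
      refine ⟨n, hyI, ?_⟩
      rintro x ⟨hx1, hxI⟩ z ⟨hz1, hzI⟩
      have hx' : x ∈ Set.Ioo (y - ε) y ∩ I := ⟨⟨by linarith [hx1.1], hx1.2⟩, hxI⟩
      have hz' : z ∈ Set.Ioo y (y + ε) ∩ I := ⟨⟨hz1.1, by linarith [hz1.2]⟩, hzI⟩
      calc ‖graphMap f x - graphMap f y‖ ≤ c * ‖graphMap f x - graphMap f z‖ := H x hx' z hz'
        _ ≤ ((n:ℝ)+1) * ‖graphMap f x - graphMap f z‖ :=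
          mul_le_mul_of_nonneg_right hcn (norm_nonneg _)
    · rintro ⟨n, hyI, H⟩
      exact ⟨hyI, (n:ℝ)+1, by linarith [Nat.cast_nonneg (α := ℝ) n],
        1/((n:ℝ)+1), by positivity, H⟩
end

section
/- For a continuous function f : I → ℝ and c ≥ 1, the set of points y where the graph of f is c-monotone (there is ε > 0 such that |ψ(x) − ψ(y)| ≤ c|ψ(x) − ψ(z)| for all x ∈ (y−ε, y) ∩ I, z ∈ (y, y+ε) ∩ I) can be written as a countable union of sets E_n such that the restriction of the graph to each E_n is a closed c-monotone subset of ℝ². -/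
/-- A set `M ⊆ ℝ²` is `c`-monotone if there is a linear order `lt` on `M` such that
`|p − q| ≤ c·|p − r|` for all `p < q < r` in `M`. -/
def CMonotoneSet (c : ℝ) (M : Set (EuclideanSpace ℝ (Fin 2))) : Prop :=
  ∃ lt : M → M → Prop, IsTrans M lt ∧ IsTrichotomous M lt ∧
    ∀ p q r : M, lt p q → lt q r →
      ‖(p : EuclideanSpace ℝ (Fin 2)) - q‖ ≤ c * ‖(p : EuclideanSpace ℝ (Fin 2)) - r‖

/-- `y` is an `M_c`-point of `f` (relative to `I`). -/
def IsMcPoint (f : ℝ → ℝ) (I : Set ℝ) (c : ℝ) (y : ℝ) : Prop :=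
  ∃ ε > 0, ∀ x ∈ Set.Ioo (y - ε) y ∩ I, ∀ z ∈ Set.Ioo y (y + ε) ∩ I,
    ‖graphMap f x - graphMap f y‖ ≤ c * ‖graphMap f x - graphMap f z‖

open Set Filter Topology

lemma continuousOn_graphMap (I : Set ℝ) (f : ℝ → ℝ) (hf : ContinuousOn f I) :
    ContinuousOn (graphMap f) I := by
  have : ContinuousOn (fun t => (![t, f t] : Fin 2 → ℝ)) I := by
    rw [continuousOn_pi]
    intro i
    fin_cases i
    · simpa using (continuousOn_id' (s := I) : ContinuousOn (fun y : ℝ => y) I)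
    · simpa using hf
  exact ((PiLp.continuous_toLp 2 (fun _ : Fin 2 => ℝ)).comp_continuousOn this)

lemma exists_pairs (I : Set ℝ) (hI : I.OrdConnected) :
    ∃ g : ℕ → ℝ × ℝ, (∀ m, Set.Icc (g m).1 (g m).2 ⊆ I) ∧
      ∀ y ∈ I, ∃ m, y ∈ Set.Icc (g m).1 (g m).2 := by
  rcases I.eq_empty_or_nonempty with hIe | hIe
  · exact ⟨fun _ => (1, 0), fun m => by simp [hIe], by simp [hIe]⟩
  · set Q : Set ℝ := (Set.range ((↑) : ℚ → ℝ) ∩ I) ∪ ({x | IsLeast I x} ∪ {x | IsGreatest I x})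
      with hQ
    have hQI : Q ⊆ I := by
      rintro x (⟨-, hx⟩ | (hx | hx))
      · exact hx
      · exact hx.1
      · exact hx.1
    have hQc : Q.Countable := by
      apply Set.Countable.union
      · exact (Set.countable_range _).mono inter_subset_left
      · apply Set.Countable.union
        · exact Set.Subsingleton.countable (fun a ha b hb => ha.unique hb)
        · exact Set.Subsingleton.countable (fun a ha b hb => ha.unique hb)
    have key : ∀ y ∈ I, ∃ p ∈ Q, ∃ q ∈ Q, p ≤ y ∧ y ≤ q := by
      intro y hy
      have hp : ∃ p ∈ Q, p ≤ y := by
        by_cases h : ∃ a ∈ I, a < y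
        · obtain ⟨a, ha, hay⟩ := h
          obtain ⟨r, har, hry⟩ := exists_rat_btwn hay
          have hrI : (r : ℝ) ∈ I := hI.out ha hy ⟨le_of_lt har, le_of_lt hry⟩
          exact ⟨r, Or.inl ⟨⟨r, rfl⟩, hrI⟩, le_of_lt hry⟩
        · exact ⟨y, Or.inr (Or.inl ⟨hy, fun b hb => not_lt.1 fun hlt => h ⟨b, hb, hlt⟩⟩),
            le_refl y⟩
      have hq : ∃ q ∈ Q, y ≤ q := by
        by_cases h : ∃ a ∈ I, y < a
        · obtain ⟨a, ha, hay⟩ := h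
          obtain ⟨r, hyr, hra⟩ := exists_rat_btwn hay
          have hrI : (r : ℝ) ∈ I := hI.out hy ha ⟨le_of_lt hyr, le_of_lt hra⟩
          exact ⟨r, Or.inl ⟨⟨r, rfl⟩, hrI⟩, le_of_lt hyr⟩
        · exact ⟨y, Or.inr (Or.inr ⟨hy, fun b hb => not_lt.1 fun hlt => h ⟨b, hb, hlt⟩⟩),
            le_refl y⟩
      obtain ⟨p, hpQ, hpy⟩ := hp
      obtain ⟨q, hqQ, hyq⟩ := hq
      exact ⟨p, hpQ, q, hqQ, hpy, hyq⟩
    have hQne : Q.Nonempty := by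
      obtain ⟨y, hy⟩ := hIe
      obtain ⟨p, hpQ, _⟩ := key y hy
      exact ⟨p, hpQ⟩
    obtain ⟨e, he⟩ := Set.Countable.exists_eq_range hQc hQne
    refine ⟨fun m => (e (Nat.unpair m).1, e (Nat.unpair m).2), ?_, ?_⟩
    · intro m
      have h1 : e (Nat.unpair m).1 ∈ Q := he ▸ ⟨_, rfl⟩
      have h2 : e (Nat.unpair m).2 ∈ Q := he ▸ ⟨_, rfl⟩
      exact hI.out (hQI h1) (hQI h2)
    · intro y hy
      obtain ⟨p, hpQ, q, hqQ, hpy, hyq⟩ := key y hy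
      rw [he] at hpQ hqQ
      obtain ⟨i, rfl⟩ := hpQ
      obtain ⟨j, rfl⟩ := hqQ
      exact ⟨Nat.pair i j, by simp only [Nat.unpair_pair]; exact ⟨hpy, hyq⟩⟩

lemma closed_piece (I : Set ℝ) (f : ℝ → ℝ) (hf : ContinuousOn f I) (c ε : ℝ)
    (a b : ℝ) (hab : Set.Icc a b ⊆ I) :
    IsClosed {y ∈ Set.Icc a b | ∀ x ∈ Set.Ioo (y - ε) y ∩ I, ∀ z ∈ Set.Ioo y (y + ε) ∩ I,
      ‖graphMap f x - graphMap f y‖ ≤ c * ‖graphMap f x - graphMap f z‖} := by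
  apply IsSeqClosed.isClosed
  intro u y hu hlim
  have hyab : y ∈ Set.Icc a b :=
    isClosed_Icc.mem_of_tendsto hlim (Filter.Eventually.of_forall fun n => (hu n).1)
  have hyI : y ∈ I := hab hyab
  refine ⟨hyab, ?_⟩
  rintro x ⟨⟨hx1, hx2⟩, hxI⟩ z ⟨⟨hz1, hz2⟩, hzI⟩
  have hO : ∀ᶠ n in atTop, u n ∈ Set.Ioo x (x + ε) ∩ Set.Ioo (z - ε) z := by
    apply hlim.eventually
    apply IsOpen.eventually_mem (by exact (isOpen_Ioo).inter isOpen_Ioo)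
    exact ⟨⟨hx2, by linarith⟩, ⟨by linarith, hz1⟩⟩
  have hle : ∀ᶠ n in atTop,
      ‖graphMap f x - graphMap f (u n)‖ ≤ c * ‖graphMap f x - graphMap f z‖ := by
    refine hO.mono fun n hn => ?_
    exact (hu n).2 x ⟨⟨by linarith [hn.1.2], hn.1.1⟩, hxI⟩ z ⟨⟨hn.2.2, by linarith [hn.2.1]⟩, hzI⟩
  have hψ : Tendsto (fun n => graphMap f (u n)) atTop (𝓝 (graphMap f y)) := by
    apply (continuousOn_graphMap I f hf y hyI).tendsto.comp
    apply tendsto_nhdsWithin_of_tendsto_nhds_of_eventually_within _ hlim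
    exact Filter.Eventually.of_forall fun n => hab (hu n).1
  exact le_of_tendsto ((tendsto_const_nhds.sub hψ).norm) hle

lemma cmono_of (f : ℝ → ℝ) (c ε : ℝ) (I E : Set ℝ) (hEI : E ⊆ I)
    (hA : ∀ y ∈ E, ∀ x ∈ Set.Ioo (y - ε) y ∩ I, ∀ z ∈ Set.Ioo y (y + ε) ∩ I,
      ‖graphMap f x - graphMap f y‖ ≤ c * ‖graphMap f x - graphMap f z‖)
    (hdiam : ∀ x ∈ E, ∀ y ∈ E, |x - y| < ε) :
    CMonotoneSet c (graphMap f '' E) := by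
  refine ⟨fun p q => (p : EuclideanSpace ℝ (Fin 2)) 0 < (q : EuclideanSpace ℝ (Fin 2)) 0,
    ⟨fun p q r => lt_trans⟩, ⟨?_⟩, ?_⟩
  · intro p q hpq hqp
    rcases lt_trichotomy ((p : EuclideanSpace ℝ (Fin 2)) 0) ((q : EuclideanSpace ℝ (Fin 2)) 0)
      with h | h | h
    · exact absurd h hpq
    · show p = q
      obtain ⟨x, hx, hpx⟩ := p.2
      obtain ⟨y, hy, hqy⟩ := q.2
      have hxy : x = y := by
        have : graphMap f x 0 = graphMap f y 0 := by rw [hpx, hqy]; exact h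
        simpa [graphMap] using this
      apply Subtype.ext
      rw [← hpx, ← hqy, hxy]
    · exact absurd h hqp
  · rintro ⟨p, hp⟩ ⟨q, hq⟩ ⟨r, hr⟩ hpq hqr
    obtain ⟨x, hx, rfl⟩ := hp
    obtain ⟨y, hy, rfl⟩ := hq
    obtain ⟨z, hz, rfl⟩ := hr
    have hxy : x < y := by simpa [graphMap] using hpq
    have hyz : y < z := by simpa [graphMap] using hqr
    have h1 : |x - y| < ε := hdiam x hx y hy
    have h2 : |z - y| < ε := hdiam z hz y hy
    rw [abs_sub_lt_iff] at h1 h2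
    exact hA y hy x ⟨⟨by linarith [h1.2], hxy⟩, hEI hx⟩ z ⟨⟨hyz, by linarith [h2.1]⟩, hEI hz⟩

/-- For `f : I → ℝ` continuous and `c ≥ 1`, the set of `M_c`-points of `f` is a countable
union of sets `E n` such that the restriction of the graph of `f` to each `E n` is a
closed `c`-monotone subset of the plane. -/
theorem stmt_4 (I : Set ℝ) (hI : I.OrdConnected) (f : ℝ → ℝ) (hf : ContinuousOn f I)
    (c : ℝ) (hc : 1 ≤ c) :
    ∃ E : ℕ → Set ℝ, {y ∈ I | IsMcPoint f I c y} = ⋃ n, E n ∧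
      ∀ n, IsClosed (graphMap f '' E n) ∧ CMonotoneSet c (graphMap f '' E n) := by
  classical
  obtain ⟨g, hg1, hg2⟩ := exists_pairs I hI
  set Cond : ℝ → ℝ → Prop := fun ε y =>
    ∀ x ∈ Set.Ioo (y - ε) y ∩ I, ∀ z ∈ Set.Ioo y (y + ε) ∩ I,
      ‖graphMap f x - graphMap f y‖ ≤ c * ‖graphMap f x - graphMap f z‖ with hCond
  set εn : ℕ → ℝ := fun n => 1 / ((n : ℝ) + 1) with hεn
  have hεpos : ∀ n, 0 < εn n := fun n => by positivity
  set δn : ℕ → ℝ := fun n => εn n / 2 with hδn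
  have hδpos : ∀ n, 0 < δn n := fun n => by
    have := hεpos n; simp only [hδn]; linarith
  set F : ℕ × ℕ × ℤ → Set ℝ := fun p =>
    {y ∈ Set.Icc (g p.2.1).1 (g p.2.1).2 | Cond (εn p.1) y} ∩
      Set.Icc ((p.2.2 : ℝ) * δn p.1) (((p.2.2 : ℝ) + 1) * δn p.1) with hF
  have hFsub : ∀ p, F p ⊆ Set.Icc (g p.2.1).1 (g p.2.1).2 := fun p y hy => hy.1.1
  have hFI : ∀ p, F p ⊆ I := fun p y hy => hg1 p.2.1 (hFsub p hy)
  refine ⟨fun k => F (Denumerable.ofNat (ℕ × ℕ × ℤ) k), ?_, ?_⟩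
  · ext y
    simp only [Set.mem_setOf_eq, Set.mem_iUnion]
    constructor
    · rintro ⟨hyI, ε0, hε0, hcond⟩
      obtain ⟨n, hn⟩ := exists_nat_one_div_lt hε0
      have hcondn : Cond (εn n) y := by
        intro x hx z hz
        refine hcond x ⟨⟨?_, hx.1.2⟩, hx.2⟩ z ⟨⟨hz.1.1, ?_⟩, hz.2⟩
        · have := hx.1.1
          simp only [hεn] at this
          linarith
        · have := hz.1.2
          simp only [hεn] at this
          linarith
      obtain ⟨m, hm⟩ := hg2 y hyI
      set j : ℤ := ⌊y / δn n⌋ with hj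
      have hδ := hδpos n
      have hj1 : (j : ℝ) * δn n ≤ y := by
        have := Int.floor_le (y / δn n)
        rw [← le_div_iff₀ hδ]
        exact this
      have hj2 : y ≤ ((j : ℝ) + 1) * δn n := by
        have := (Int.lt_floor_add_one (y / δn n)).le
        rw [← div_le_iff₀ hδ]
        push_cast
        exact this
      refine ⟨Encodable.encode ((n, m, j) : ℕ × ℕ × ℤ), ?_⟩
      rw [Denumerable.ofNat_encode]
      exact ⟨⟨hm, hcondn⟩, hj1, hj2⟩
    · rintro ⟨k, hk⟩
      set p := Denumerable.ofNat (ℕ × ℕ × ℤ) k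
      refine ⟨hFI p hk, εn p.1, hεpos p.1, hk.1.2⟩
  · intro k
    set p := Denumerable.ofNat (ℕ × ℕ × ℤ) k with hp
    have hclosed : IsClosed (F p) :=
      (closed_piece I f hf c (εn p.1) (g p.2.1).1 (g p.2.1).2 (hg1 p.2.1)).inter isClosed_Icc
    have hcompact : IsCompact (F p) :=
      IsCompact.of_isClosed_subset isCompact_Icc hclosed (hFsub p)
    constructor
    · exact (hcompact.image_of_continuousOn
        ((continuousOn_graphMap I f hf).mono (hFI p))).isClosed
    · refine cmono_of f c (εn p.1) I (F p) (hFI p) (fun y hy => hy.1.2) ?_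
      intro x hx y hy
      have hδ := hδpos p.1
      have hε := hεpos p.1
      have hδε : δn p.1 < εn p.1 := by simp only [hδn]; linarith
      have hx1 := hx.2.1
      have hx2 := hx.2.2
      have hy1 := hy.2.1
      have hy2 := hy.2.2
      have hexp : ((p.2.2 : ℝ) + 1) * δn p.1 = (p.2.2 : ℝ) * δn p.1 + δn p.1 := by ring
      rw [abs_sub_lt_iff]
      constructor <;> linarith
end

section
/- If f : I → ℝ is continuous and f has a (possibly infinite) derivative at a point y ∈ I, then y is an M-point of f; i.e., the graph of f is monotone at ψ(y). -/
open Filter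

/-- `f` has a derivative at `y` relative to `I`, a finite one or `+∞` or `−∞`. -/
def HasPossiblyInfiniteDerivAt (f : ℝ → ℝ) (I : Set ℝ) (y : ℝ) : Prop :=
  (∃ d : ℝ, HasDerivWithinAt f d I y) ∨
  Tendsto (fun t => (f t - f y) / (t - y)) (nhdsWithin y (I \ {y})) atTop ∨
  Tendsto (fun t => (f t - f y) / (t - y)) (nhdsWithin y (I \ {y})) atBot

lemma norm_graphMap_sub (f : ℝ → ℝ) (x z : ℝ) :
    ‖graphMap f x - graphMap f z‖ = Real.sqrt ((x - z)^2 + (f x - f z)^2) := by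
  rw [EuclideanSpace.norm_eq]
  congr 1
  simp [graphMap, Fin.sum_univ_two, sq_abs]

lemma fst_le (f : ℝ → ℝ) (x z : ℝ) : |x - z| ≤ ‖graphMap f x - graphMap f z‖ := by
  rw [norm_graphMap_sub, ← Real.sqrt_sq_eq_abs]
  exact Real.sqrt_le_sqrt (by nlinarith [sq_nonneg (f x - f z)])

lemma snd_le (f : ℝ → ℝ) (x z : ℝ) : |f x - f z| ≤ ‖graphMap f x - graphMap f z‖ := by
  rw [norm_graphMap_sub, ← Real.sqrt_sq_eq_abs]
  exact Real.sqrt_le_sqrt (by nlinarith [sq_nonneg (x - z)])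

lemma norm_le' (f : ℝ → ℝ) (x z : ℝ) :
    ‖graphMap f x - graphMap f z‖ ≤ |x - z| + |f x - f z| := by
  rw [norm_graphMap_sub]
  have h : (x - z)^2 + (f x - f z)^2 ≤ (|x - z| + |f x - f z|)^2 := by
    nlinarith [abs_nonneg (x - z), abs_nonneg (f x - f z), sq_abs (x - z), sq_abs (f x - f z),
      mul_nonneg (abs_nonneg (x - z)) (abs_nonneg (f x - f z))]
  calc Real.sqrt ((x-z)^2 + (f x - f z)^2) ≤ Real.sqrt ((|x - z| + |f x - f z|)^2) :=
        Real.sqrt_le_sqrt h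
    _ = |x - z| + |f x - f z| := Real.sqrt_sq (by positivity)

lemma eps_of_eventually {I : Set ℝ} {y : ℝ} {p : ℝ → Prop}
    (h : ∀ᶠ t in nhdsWithin y (I \ {y}), p t) :
    ∃ ε > 0, ∀ t, |t - y| < ε → t ∈ I → t ≠ y → p t := by
  rw [eventually_iff, Metric.mem_nhdsWithin_iff] at h
  obtain ⟨ε, hε, hsub⟩ := h
  refine ⟨ε, hε, fun t ht htI htne => hsub ⟨?_, htI, htne⟩⟩
  simpa [Metric.mem_ball, Real.dist_eq] using ht

/-- If `f : I → ℝ` is continuous and has a (possibly infinite) derivative at `y ∈ I`,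
then `y` is an `M`-point of `f`, i.e. the graph of `f` is monotone at `ψ y`. -/
theorem stmt_6 (I : Set ℝ) (hI : I.OrdConnected) (f : ℝ → ℝ) (hf : ContinuousOn f I)
    (y : ℝ) (hy : y ∈ I) (hd : HasPossiblyInfiniteDerivAt f I y) :
    IsMPoint f I y := by
  rcases hd with ⟨d, hd⟩ | hd | hd
  · -- finite derivative
    rw [hasDerivWithinAt_iff_tendsto_slope] at hd
    have hev : ∀ᶠ t in nhdsWithin y (I \ {y}), |slope f y t - d| < 1 := by
      have := Metric.tendsto_nhds.mp hd 1 one_pos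
      simpa [Real.dist_eq] using this
    obtain ⟨ε, hε, hp⟩ := eps_of_eventually hev
    refine ⟨|d| + 2, by linarith [abs_nonneg d], ε, hε, ?_⟩
    rintro x ⟨⟨hx1, hx2⟩, hxI⟩ z ⟨⟨hz1, hz2⟩, hzI⟩
    have hxb : |f x - f y| ≤ (|d| + 1) * |x - y| := by
      have hxε : |x - y| < ε := by rw [abs_of_neg (by linarith)]; linarith
      have hs := hp x hxε hxI (ne_of_lt hx2)
      have hxy : x - y ≠ 0 := sub_ne_zero.mpr (ne_of_lt hx2)
      have heq : f x - f y = slope f y x * (x - y) := by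
        rw [slope_def_field]; field_simp
      rw [heq, abs_mul]
      have : |slope f y x| ≤ |d| + 1 := by
        have := abs_abs_sub_abs_le_abs_sub (slope f y x) d
        have h2 := (abs_le.mp (le_of_lt hs))
        have : |slope f y x| - |d| ≤ 1 := by
          nlinarith [abs_sub_abs_le_abs_sub (slope f y x) d]
        linarith
      exact mul_le_mul_of_nonneg_right this (abs_nonneg _)
    have h1 := norm_le' f x y
    have h2 := fst_le f x z
    have habs1 : |x - y| = y - x := by rw [abs_of_neg (by linarith)]; ring
    have habs2 : |x - z| = z - x := by rw [abs_of_neg (by linarith)]; ring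
    -- ‖ψx-ψy‖ ≤ (y-x) + (|d|+1)(y-x) = (|d|+2)(y-x) ≤ (|d|+2)(z-x) ≤ (|d|+2)‖ψx-ψz‖
    have key : ‖graphMap f x - graphMap f y‖ ≤ (|d| + 2) * (z - x) := by
      rw [habs1] at hxb
      nlinarith [abs_nonneg d]
    have hnn : (0:ℝ) ≤ |d| + 2 := by positivity
    calc ‖graphMap f x - graphMap f y‖ ≤ (|d| + 2) * (z - x) := key
      _ ≤ (|d| + 2) * ‖graphMap f x - graphMap f z‖ := by
          apply mul_le_mul_of_nonneg_left _ hnn; rw [← habs2]; exact h2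
  · -- +∞
    have hev : ∀ᶠ t in nhdsWithin y (I \ {y}), 1 ≤ (f t - f y) / (t - y) :=
      hd.eventually (eventually_ge_atTop 1)
    obtain ⟨ε, hε, hp⟩ := eps_of_eventually hev
    refine ⟨2, one_le_two, ε, hε, ?_⟩
    rintro x ⟨⟨hx1, hx2⟩, hxI⟩ z ⟨⟨hz1, hz2⟩, hzI⟩
    have hxε : |x - y| < ε := by rw [abs_of_neg (by linarith)]; linarith
    have hzε : |z - y| < ε := by rw [abs_of_pos (by linarith)]; linarith
    have hsx := hp x hxε hxI (ne_of_lt hx2)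
    have hsz := hp z hzε hzI (ne_of_gt hz1)
    have hfx : f x - f y ≤ x - y := by
      have hneg : x - y < 0 := by linarith
      have := (le_div_iff_of_neg hneg).mp hsx
      linarith
    have hfz : z - y ≤ f z - f y := by
      have hpos : (0:ℝ) < z - y := by linarith
      have := (one_le_div hpos).mp hsz
      linarith
    have h1 := norm_le' f x y
    have h2 := snd_le f x z
    have habs1 : |x - y| = y - x := by rw [abs_of_neg (by linarith)]; ring
    have habs2 : |f x - f y| = f y - f x := by rw [abs_of_neg (by linarith)]; ring
    have habs3 : |f x - f z| = f z - f x := by rw [abs_of_neg (by linarith)]; ring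
    rw [habs1, habs2] at h1
    rw [habs3] at h2
    linarith
  · -- −∞
    have hev : ∀ᶠ t in nhdsWithin y (I \ {y}), (f t - f y) / (t - y) ≤ -1 :=
      hd.eventually (eventually_le_atBot (-1))
    obtain ⟨ε, hε, hp⟩ := eps_of_eventually hev
    refine ⟨2, one_le_two, ε, hε, ?_⟩
    rintro x ⟨⟨hx1, hx2⟩, hxI⟩ z ⟨⟨hz1, hz2⟩, hzI⟩
    have hxε : |x - y| < ε := by rw [abs_of_neg (by linarith)]; linarith
    have hzε : |z - y| < ε := by rw [abs_of_pos (by linarith)]; linarith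
    have hsx := hp x hxε hxI (ne_of_lt hx2)
    have hsz := hp z hzε hzI (ne_of_gt hz1)
    have hfx : y - x ≤ f x - f y := by
      have hneg : x - y < 0 := by linarith
      have := (div_le_iff_of_neg hneg).mp hsx
      linarith
    have hfz : f z - f y ≤ y - z := by
      have hpos : (0:ℝ) < z - y := by linarith
      have := (div_le_iff₀ hpos).mp hsz
      linarith
    have h1 := norm_le' f x y
    have h2 := snd_le f x z
    have habs1 : |x - y| = y - x := by rw [abs_of_neg (by linarith)]; ring
    have habs2 : |f x - f y| = f x - f y := by rw [abs_of_pos (by linarith)]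
    have habs3 : |f x - f z| = f x - f z := by rw [abs_of_pos (by linarith)]
    rw [habs1, habs2] at h1
    rw [habs3] at h2
    linarith
end

section
/- If f : I → ℝ is continuous and the graph of f is a monotone subset of ℝ², then for every x ∈ I the upper right approximate Dini derivative of f at x equals the upper right Dini derivative of f at x. -/
open MeasureTheory Filter
open scoped ENNReal

set_option maxHeartbeats 1000000

/-- A set `M ⊆ ℝ²` is monotone if, for some `c > 0`, there is a linear order `lt` on `M`
such that `|p − q| ≤ c·|p − r|` for all `p < q < r` in `M`. -/
def MonotoneSet (M : Set (EuclideanSpace ℝ (Fin 2))) : Prop :=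
  ∃ c : ℝ, 0 < c ∧ ∃ lt : M → M → Prop, IsTrans M lt ∧ IsTrichotomous M lt ∧
    ∀ p q r : M, lt p q → lt q r →
      ‖(p : EuclideanSpace ℝ (Fin 2)) - q‖ ≤ c * ‖(p : EuclideanSpace ℝ (Fin 2)) - r‖

/-- Upper right Dini derivative of `f` at `x`, relative to `I`, with values in `EReal`. -/
noncomputable def diniSupR (f : ℝ → ℝ) (I : Set ℝ) (x : ℝ) : EReal :=
  limsup (fun t => (((f t - f x) / (t - x) : ℝ) : EReal)) (nhdsWithin x (Set.Ioi x ∩ I))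

/-- Upper right approximate Dini derivative of `f` at `x`, relative to `I`:
`inf {t : lim_{δ→0+} (1/δ)·λ({y ∈ (x, x+δ) : (f y − f x)/(y − x) ≤ t}) = 1}`. -/
noncomputable def aDiniSupR (f : ℝ → ℝ) (I : Set ℝ) (x : ℝ) : EReal :=
  sInf {t : EReal | ∃ s : ℝ, t = (s : EReal) ∧
    Tendsto (fun δ : ℝ =>
        volume {y | y ∈ Set.Ioo x (x + δ) ∩ I ∧ (f y - f x) / (y - x) ≤ s} /
          ENNReal.ofReal δ)
      (nhdsWithin 0 (Set.Ioi 0)) (nhds 1)}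

lemma graphMap_norm (f : ℝ → ℝ) (r r' : ℝ) :
    ‖graphMap f r - graphMap f r'‖ = Real.sqrt ((r - r')^2 + (f r - f r')^2) := by
  rw [EuclideanSpace.norm_eq]
  congr 1
  rw [Fin.sum_univ_two]
  simp [graphMap, Real.norm_eq_abs, sq_abs]

lemma graphMap_inj (f : ℝ → ℝ) {r r' : ℝ} (h : graphMap f r = graphMap f r') : r = r' := by
  have := congrArg (fun v : EuclideanSpace ℝ (Fin 2) => v 0) h
  simpa [graphMap] using this

lemma abs_fst_le (f : ℝ → ℝ) (r r' : ℝ) : |r - r'| ≤ ‖graphMap f r - graphMap f r'‖ := by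
  rw [graphMap_norm, ← Real.sqrt_sq_eq_abs]
  apply Real.sqrt_le_sqrt; nlinarith [sq_nonneg (f r - f r')]

lemma abs_snd_le (f : ℝ → ℝ) (r r' : ℝ) : |f r - f r'| ≤ ‖graphMap f r - graphMap f r'‖ := by
  rw [graphMap_norm, ← Real.sqrt_sq_eq_abs]
  apply Real.sqrt_le_sqrt; nlinarith [sq_nonneg (r - r')]

lemma norm_graph_le (f : ℝ → ℝ) (r r' : ℝ) :
    ‖graphMap f r - graphMap f r'‖ ≤ |r - r'| + |f r - f r'| := by
  rw [graphMap_norm]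
  have h : (r - r')^2 + (f r - f r')^2 ≤ (|r - r'| + |f r - f r'|)^2 := by
    have := abs_nonneg (r - r'); have := abs_nonneg (f r - f r')
    nlinarith [sq_abs (r - r'), sq_abs (f r - f r'), mul_nonneg (abs_nonneg (r-r')) (abs_nonneg (f r - f r'))]
  calc Real.sqrt ((r - r')^2 + (f r - f r')^2) ≤ Real.sqrt ((|r - r'| + |f r - f r'|)^2) :=
        Real.sqrt_le_sqrt h
    _ = |r - r'| + |f r - f r'| := Real.sqrt_sq (by positivity)



/-- order relation transported to parameters -/
def Lrel (f : ℝ → ℝ) (I : Set ℝ) (lt : (graphMap f '' I) → (graphMap f '' I) → Prop)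
    (r r' : ℝ) : Prop :=
  ∃ (h : graphMap f r ∈ graphMap f '' I) (h' : graphMap f r' ∈ graphMap f '' I),
    lt ⟨_, h⟩ ⟨_, h'⟩

section rel
variable {f : ℝ → ℝ} {I : Set ℝ} {c : ℝ}
  {lt : (graphMap f '' I) → (graphMap f '' I) → Prop}

lemma Lrel.chain
    (hineq : ∀ p q r : (graphMap f '' I), lt p q → lt q r →
      ‖(p : EuclideanSpace ℝ (Fin 2)) - q‖ ≤ c * ‖(p : EuclideanSpace ℝ (Fin 2)) - r‖)
    {r1 r2 r3 : ℝ} (h12 : Lrel f I lt r1 r2) (h23 : Lrel f I lt r2 r3) :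
    ‖graphMap f r1 - graphMap f r2‖ ≤ c * ‖graphMap f r1 - graphMap f r3‖ := by
  obtain ⟨h1, h2, l12⟩ := h12
  obtain ⟨h2', h3, l23⟩ := h23
  exact hineq ⟨_, h1⟩ ⟨_, h2⟩ ⟨_, h3⟩ l12 l23

lemma Lrel.gap (hc : 0 < c)
    (hineq : ∀ p q r : (graphMap f '' I), lt p q → lt q r →
      ‖(p : EuclideanSpace ℝ (Fin 2)) - q‖ ≤ c * ‖(p : EuclideanSpace ℝ (Fin 2)) - r‖)
    {u v w : ℝ}
    (h : (Lrel f I lt u v ∧ Lrel f I lt v w) ∨ (Lrel f I lt w v ∧ Lrel f I lt v u)) :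
    ‖graphMap f u - graphMap f v‖ ≤ (1 + c) * ‖graphMap f u - graphMap f w‖ := by
  rcases h with ⟨h1, h2⟩ | ⟨h1, h2⟩
  · have := Lrel.chain hineq h1 h2
    nlinarith [norm_nonneg (graphMap f u - graphMap f w)]
  · have hwv := Lrel.chain hineq h1 h2
    have t1 : ‖graphMap f u - graphMap f v‖ ≤ ‖graphMap f u - graphMap f w‖ +
        ‖graphMap f w - graphMap f v‖ := norm_sub_le_norm_sub_add_norm_sub _ _ _
    have t2 : ‖graphMap f w - graphMap f u‖ = ‖graphMap f u - graphMap f w‖ := norm_sub_rev _ _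
    nlinarith [norm_nonneg (graphMap f u - graphMap f w)]

lemma Lrel.tri (htri : IsTrichotomous _ lt) {r r' : ℝ} (hr : r ∈ I) (hr' : r' ∈ I)
    (hne : r ≠ r') : Lrel f I lt r r' ∨ Lrel f I lt r' r := by
  have h1 : graphMap f r ∈ graphMap f '' I := ⟨r, hr, rfl⟩
  have h2 : graphMap f r' ∈ graphMap f '' I := ⟨r', hr', rfl⟩
  haveI := htri
  rcases trichotomous_of lt ⟨_, h1⟩ ⟨_, h2⟩ with h | h | h
  · exact Or.inl ⟨h1, h2, h⟩
  · exact absurd (graphMap_inj f (congrArg Subtype.val h)) hne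
  · exact Or.inr ⟨h2, h1, h⟩

end rel


/-- metric betweenness consequence of monotone graph -/
lemma key_min (f : ℝ → ℝ) (I : Set ℝ) (hI : I.OrdConnected) (hf : ContinuousOn f I)
    (c : ℝ) (hc : 0 < c) (lt : (graphMap f '' I) → (graphMap f '' I) → Prop)
    (htri : IsTrichotomous _ lt)
    (hineq : ∀ p q r : (graphMap f '' I), lt p q → lt q r →
      ‖(p : EuclideanSpace ℝ (Fin 2)) - q‖ ≤ c * ‖(p : EuclideanSpace ℝ (Fin 2)) - r‖)
    {a b d : ℝ} (ha : a ∈ I) (hd : d ∈ I) (hab : a < b) (hbd : b < d) :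
    min ‖graphMap f a - graphMap f b‖ ‖graphMap f b - graphMap f d‖
      ≤ c * ‖graphMap f a - graphMap f d‖ := by
  set L := Lrel f I lt with hL
  have hsub : Set.Icc a d ⊆ I := hI.out ha hd
  have hIoo : ∀ r ∈ Set.Ioo a d, r ∈ I := fun r hr => hsub ⟨hr.1.le, hr.2.le⟩
  -- continuity of the graph map, metric form
  have cont : ∀ r ∈ I, ∀ ε > (0:ℝ), ∃ η > (0:ℝ), ∀ r' ∈ I, |r' - r| < η →
      ‖graphMap f r' - graphMap f r‖ < ε := by
    intro r hr ε hε
    rcases Metric.continuousOn_iff.1 hf r hr (ε/2) (by linarith) with ⟨η₁, hη₁, hcont⟩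
    refine ⟨min η₁ (ε/2), by positivity, fun r' hr' hlt => ?_⟩
    have h1 : |f r' - f r| < ε/2 := by
      have := hcont r' hr' (by rw [Real.dist_eq]; exact lt_of_lt_of_le hlt (min_le_left _ _))
      rwa [Real.dist_eq] at this
    have h2 : |r' - r| < ε/2 := lt_of_lt_of_le hlt (min_le_right _ _)
    calc ‖graphMap f r' - graphMap f r‖ ≤ |r' - r| + |f r' - f r| := norm_graph_le f r' r
      _ < ε := by linarith
  -- the three order-position sets
  set SU : Set ℝ := {r | r ∈ Set.Ioo a d ∧ ((L a r ∧ L r d) ∨ (L d r ∧ L r a))} with hSU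
  set SV1 : Set ℝ := {r | r ∈ Set.Ioo a d ∧ (L r a ∧ L r d)} with hSV1
  set SV2 : Set ℝ := {r | r ∈ Set.Ioo a d ∧ (L a r ∧ L d r)} with hSV2
  have cover : ∀ r ∈ Set.Ioo a d, r ∈ SU ∨ r ∈ SV1 ∨ r ∈ SV2 := by
    intro r hr
    have hrI := hIoo r hr
    have t1 := Lrel.tri htri ha hrI (ne_of_lt hr.1)
    have t2 := Lrel.tri htri hrI hd (ne_of_lt hr.2)
    rcases t1 with h1 | h1 <;> rcases t2 with h2 | h2
    · exact Or.inl ⟨hr, Or.inl ⟨h1, h2⟩⟩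
    · exact Or.inr (Or.inr ⟨hr, h1, h2⟩)
    · exact Or.inr (Or.inl ⟨hr, h1, h2⟩)
    · exact Or.inl ⟨hr, Or.inr ⟨h2, h1⟩⟩
  -- distance to endpoints is positive inside
  have posdist : ∀ r ∈ Set.Ioo a d,
      0 < min ‖graphMap f r - graphMap f a‖ ‖graphMap f r - graphMap f d‖ := by
    intro r hr
    have h1 : graphMap f r ≠ graphMap f a := fun h => (ne_of_gt hr.1) (graphMap_inj f h)
    have h2 : graphMap f r ≠ graphMap f d := fun h => (ne_of_lt hr.2) (graphMap_inj f h)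
    exact lt_min (norm_sub_pos_iff.2 h1) (norm_sub_pos_iff.2 h2)
  -- core observation: if some endpoint is order-between r and r', they can't be too close
  have core : ∀ r ∈ Set.Ioo a d, ∀ r' ∈ Set.Ioo a d, ∀ x,
      ((L r x ∧ L x r') ∨ (L r' x ∧ L x r)) →
      min ‖graphMap f r - graphMap f a‖ ‖graphMap f r - graphMap f d‖ ≤
        ‖graphMap f r - graphMap f x‖ →
      (1 + c) * ‖graphMap f r - graphMap f r'‖ <
        min ‖graphMap f r - graphMap f a‖ ‖graphMap f r - graphMap f d‖ → False := by
    intro r hr r' hr' x hbetween hmx hsmall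
    have := Lrel.gap hc hineq hbetween
    have := le_trans hmx this
    linarith
  -- generic openness via the core observation
  have openness : ∀ S, (S = SU ∨ S = SV1 ∨ S = SV2) →
      (∀ r ∈ S, ∀ r' ∈ Set.Ioo a d,
        (1 + c) * ‖graphMap f r - graphMap f r'‖ <
          min ‖graphMap f r - graphMap f a‖ ‖graphMap f r - graphMap f d‖ → r' ∈ S) →
      IsOpen S := by
    intro S hS hstab
    rw [Metric.isOpen_iff]
    intro r hrS
    have hr : r ∈ Set.Ioo a d := by
      rcases hS with h | h | h <;> (subst h; exact hrS.1)
    have hm := posdist r hr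
    set m := min ‖graphMap f r - graphMap f a‖ ‖graphMap f r - graphMap f d‖ with hmdef
    rcases cont r (hIoo r hr) (m / (1+c) / 2) (by positivity) with ⟨η, hη, hcont⟩
    refine ⟨min η (min (r - a) (d - r)), by
      simp only [gt_iff_lt, lt_min_iff]; exact ⟨hη, by linarith [hr.1], by linarith [hr.2]⟩,
      fun r' hball => ?_⟩
    rw [Metric.mem_ball, Real.dist_eq] at hball
    have hr'Ioo : r' ∈ Set.Ioo a d := by
      have h1 := lt_of_lt_of_le hball (le_trans (min_le_right _ _) (min_le_left _ _))
      have h2 := lt_of_lt_of_le hball (le_trans (min_le_right _ _) (min_le_right _ _))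
      rcases abs_lt.1 h1 with ⟨u1, u2⟩
      rcases abs_lt.1 h2 with ⟨v1, v2⟩
      exact ⟨by linarith, by linarith⟩
    have hclose : ‖graphMap f r - graphMap f r'‖ < m / (1+c) / 2 := by
      rw [norm_sub_rev]
      exact hcont r' (hIoo r' hr'Ioo) (lt_of_lt_of_le hball (min_le_left _ _))
    have hsmall : (1 + c) * ‖graphMap f r - graphMap f r'‖ < m := by
      have h1 : (1+c) * ‖graphMap f r - graphMap f r'‖ < (1+c) * (m / (1+c) / 2) :=
        mul_lt_mul_of_pos_left hclose (by linarith)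
      have h2 : (1+c) * (m / (1+c) / 2) = m / 2 := by field_simp
      rw [h2] at h1; linarith
    exact hstab r hrS r' hr'Ioo hsmall
  -- stability of each set
  have stabSU : ∀ r ∈ SU, ∀ r' ∈ Set.Ioo a d,
      (1 + c) * ‖graphMap f r - graphMap f r'‖ <
        min ‖graphMap f r - graphMap f a‖ ‖graphMap f r - graphMap f d‖ → r' ∈ SU := by
    intro r hrS r' hr' hsmall
    rcases cover r' hr' with h | h | h
    · exact h
    · exfalso
      rcases hrS.2 with ⟨h1, h2⟩ | ⟨h1, h2⟩
      · exact core r hrS.1 r' hr' a (Or.inr ⟨h.2.1, h1⟩) (min_le_left _ _) hsmall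
      · exact core r hrS.1 r' hr' d (Or.inr ⟨h.2.2, h1⟩) (min_le_right _ _) hsmall
    · exfalso
      rcases hrS.2 with ⟨h1, h2⟩ | ⟨h1, h2⟩
      · exact core r hrS.1 r' hr' d (Or.inl ⟨h2, h.2.2⟩) (min_le_right _ _) hsmall
      · exact core r hrS.1 r' hr' a (Or.inl ⟨h2, h.2.1⟩) (min_le_left _ _) hsmall
  have stabSV1 : ∀ r ∈ SV1, ∀ r' ∈ Set.Ioo a d,
      (1 + c) * ‖graphMap f r - graphMap f r'‖ <
        min ‖graphMap f r - graphMap f a‖ ‖graphMap f r - graphMap f d‖ → r' ∈ SV1 := by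
    intro r hrS r' hr' hsmall
    rcases cover r' hr' with h | h | h
    · exfalso
      rcases h.2 with ⟨h1, h2⟩ | ⟨h1, h2⟩
      · exact core r hrS.1 r' hr' a (Or.inl ⟨hrS.2.1, h1⟩) (min_le_left _ _) hsmall
      · exact core r hrS.1 r' hr' d (Or.inl ⟨hrS.2.2, h1⟩) (min_le_right _ _) hsmall
    · exact h
    · exact absurd (core r hrS.1 r' hr' a (Or.inl ⟨hrS.2.1, h.2.1⟩)
        (min_le_left _ _) hsmall) not_false
  have stabSV2 : ∀ r ∈ SV2, ∀ r' ∈ Set.Ioo a d,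
      (1 + c) * ‖graphMap f r - graphMap f r'‖ <
        min ‖graphMap f r - graphMap f a‖ ‖graphMap f r - graphMap f d‖ → r' ∈ SV2 := by
    intro r hrS r' hr' hsmall
    rcases cover r' hr' with h | h | h
    · exfalso
      rcases h.2 with ⟨h1, h2⟩ | ⟨h1, h2⟩
      · exact core r hrS.1 r' hr' d (Or.inr ⟨h2, hrS.2.2⟩) (min_le_right _ _) hsmall
      · exact core r hrS.1 r' hr' a (Or.inr ⟨h2, hrS.2.1⟩) (min_le_left _ _) hsmall
    · exact absurd (core r hrS.1 r' hr' a (Or.inr ⟨h.2.1, hrS.2.1⟩)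
        (min_le_left _ _) hsmall) not_false
    · exact h
  have hSUopen : IsOpen SU := openness SU (Or.inl rfl) stabSU
  have hSV1open : IsOpen SV1 := openness SV1 (Or.inr (Or.inl rfl)) stabSV1
  have hSV2open : IsOpen SV2 := openness SV2 (Or.inr (Or.inr rfl)) stabSV2

  -- eqq consequence
  have eqq : ∀ r r' : ℝ, L r r' → L r' r → r = r' := by
    intro r r' h1 h2
    have := Lrel.chain hineq h1 h2
    rw [sub_self, norm_zero, mul_zero] at this
    have h0 : ‖graphMap f r - graphMap f r'‖ = 0 := le_antisymm this (norm_nonneg _)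
    exact graphMap_inj f (sub_eq_zero.1 (norm_eq_zero.1 h0))
  have had : a < d := lt_trans hab hbd
  have hD : 0 < ‖graphMap f a - graphMap f d‖ := by
    refine norm_sub_pos_iff.2 (fun h => (ne_of_lt had) (graphMap_inj f h))
  set D := ‖graphMap f a - graphMap f d‖ with hDdef
  -- points near the endpoints
  have near_d : ∀ η > (0:ℝ), ∃ r' ∈ Set.Ioo a d, |r' - d| < η := by
    intro η hη
    refine ⟨max ((a+d)/2) (d - η/2), ⟨lt_max_of_lt_left (by linarith), max_lt (by linarith) (by linarith)⟩, ?_⟩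
    have h1 : d - η/2 ≤ max ((a+d)/2) (d - η/2) := le_max_right _ _
    have h2 : max ((a+d)/2) (d - η/2) < d := max_lt (by linarith) (by linarith)
    rw [abs_sub_lt_iff]; constructor <;> linarith
  have near_a : ∀ η > (0:ℝ), ∃ r' ∈ Set.Ioo a d, |r' - a| < η := by
    intro η hη
    refine ⟨min ((a+d)/2) (a + η/2), ⟨lt_min (by linarith) (by linarith), min_lt_of_left_lt (by linarith)⟩, ?_⟩
    have h1 : min ((a+d)/2) (a + η/2) ≤ a + η/2 := min_le_right _ _
    have h2 : a < min ((a+d)/2) (a + η/2) := lt_min (by linarith) (by linarith)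
    rw [abs_sub_lt_iff]; constructor <;> linarith
  -- close to endpoint e, far from the gap bound: generic endpoint contradiction
  have endpt : ∀ e ∈ I, (∃ u v w, ((L u v ∧ L v w) ∨ (L w v ∧ L v u)) ∧
      ‖graphMap f u - graphMap f v‖ = D ∧ False) → False := fun _ _ h => h.choose_spec.choose_spec.choose_spec.2.2
  -- SV1 is not everything
  have notSV1all : ¬ (Set.Ioo a d ⊆ SV1) := by
    intro hall
    rcases Lrel.tri htri ha hd (ne_of_lt had) with hLad | hLda
    · rcases cont d hd (D/(1+c)/2) (by positivity) with ⟨η, hη, hcont⟩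
      rcases near_d η hη with ⟨r', hr', hcl⟩
      have hmem := hall hr'
      have hgap := Lrel.gap hc hineq (Or.inr ⟨hmem.2.1, hLad⟩ :
        (L d a ∧ L a r') ∨ (L r' a ∧ L a d))
      have hnd : ‖graphMap f d - graphMap f r'‖ < D/(1+c)/2 := by
        rw [norm_sub_rev]; exact hcont r' (hIoo r' hr') hcl
      have hmul := mul_lt_mul_of_pos_left hnd (show (0:ℝ) < 1+c by linarith)
      have heq : (1+c)*(D/(1+c)/2) = D/2 := by field_simp
      rw [heq] at hmul
      rw [norm_sub_rev (graphMap f d) (graphMap f a)] at hgap; linarith [hDdef]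
    · rcases cont a ha (D/(1+c)/2) (by positivity) with ⟨η, hη, hcont⟩
      rcases near_a η hη with ⟨r', hr', hcl⟩
      have hmem := hall hr'
      have hgap := Lrel.gap hc hineq (Or.inr ⟨hmem.2.2, hLda⟩ :
        (L a d ∧ L d r') ∨ (L r' d ∧ L d a))
      have hna : ‖graphMap f a - graphMap f r'‖ < D/(1+c)/2 := by
        rw [norm_sub_rev]; exact hcont r' (hIoo r' hr') hcl
      have hmul := mul_lt_mul_of_pos_left hna (show (0:ℝ) < 1+c by linarith)
      have heq : (1+c)*(D/(1+c)/2) = D/2 := by field_simp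
      rw [heq] at hmul
      linarith
  have notSV2all : ¬ (Set.Ioo a d ⊆ SV2) := by
    intro hall
    rcases Lrel.tri htri ha hd (ne_of_lt had) with hLad | hLda
    · rcases cont a ha (D/(1+c)/2) (by positivity) with ⟨η, hη, hcont⟩
      rcases near_a η hη with ⟨r', hr', hcl⟩
      have hmem := hall hr'
      have hgap := Lrel.gap hc hineq (Or.inl ⟨hLad, hmem.2.2⟩ :
        (L a d ∧ L d r') ∨ (L r' d ∧ L d a))
      have hna : ‖graphMap f a - graphMap f r'‖ < D/(1+c)/2 := by
        rw [norm_sub_rev]; exact hcont r' (hIoo r' hr') hcl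
      have hmul := mul_lt_mul_of_pos_left hna (show (0:ℝ) < 1+c by linarith)
      have heq : (1+c)*(D/(1+c)/2) = D/2 := by field_simp
      rw [heq] at hmul
      linarith
    · rcases cont d hd (D/(1+c)/2) (by positivity) with ⟨η, hη, hcont⟩
      rcases near_d η hη with ⟨r', hr', hcl⟩
      have hmem := hall hr'
      have hgap := Lrel.gap hc hineq (Or.inl ⟨hLda, hmem.2.1⟩ :
        (L d a ∧ L a r') ∨ (L r' a ∧ L a d))
      have hnd : ‖graphMap f d - graphMap f r'‖ < D/(1+c)/2 := by
        rw [norm_sub_rev]; exact hcont r' (hIoo r' hr') hcl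
      have hmul := mul_lt_mul_of_pos_left hnd (show (0:ℝ) < 1+c by linarith)
      have heq : (1+c)*(D/(1+c)/2) = D/2 := by field_simp
      rw [heq] at hmul
      rw [norm_sub_rev (graphMap f d) (graphMap f a)] at hgap; linarith [hDdef]
  -- disjointness
  have disj1 : ∀ r, r ∈ SV1 → r ∉ SU ∪ SV2 := by
    rintro r h1 (h2 | h2)
    · rcases h2.2 with ⟨ha1, _⟩ | ⟨hd1, _⟩
      · exact absurd (eqq r a h1.2.1 ha1) (ne_of_gt h1.1.1)
      · exact absurd (eqq r d h1.2.2 hd1) (ne_of_lt h1.1.2)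
    · exact absurd (eqq r a h1.2.1 h2.2.1) (ne_of_gt h1.1.1)
  have disj2 : ∀ r, r ∈ SV2 → r ∉ SU ∪ SV1 := by
    rintro r h1 (h2 | h2)
    · rcases h2.2 with ⟨_, hd1⟩ | ⟨_, ha1⟩
      · exact absurd (eqq r d hd1 h1.2.2) (ne_of_lt h1.1.2)
      · exact absurd (eqq r a ha1 h1.2.1) (ne_of_gt h1.1.1)
    · exact absurd (eqq r a h2.2.1 h1.2.1) (ne_of_gt h1.1.1)
  -- preconnectedness
  have hpre : IsPreconnected (Set.Ioo a d) := isPreconnected_Ioo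
  have hSV1empty : SV1 = ∅ := by
    by_contra hne
    rcases Set.nonempty_iff_ne_empty.2 hne with ⟨r0, hr0⟩
    have hor : Set.Ioo a d ⊆ SV1 := by
      intro r hr
      rcases cover r hr with h | h | h
      · exfalso
        have hv : (Set.Ioo a d ∩ (SV1 ∩ (SU ∪ SV2))).Nonempty :=
          hpre SV1 (SU ∪ SV2) hSV1open (hSUopen.union hSV2open)
            (fun y hy => by rcases cover y hy with h' | h' | h'
                            · exact Or.inr (Or.inl h')
                            · exact Or.inl h'
                            · exact Or.inr (Or.inr h'))
            ⟨r0, hr0.1, hr0⟩ ⟨r, hr, Or.inl h⟩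
        rcases hv with ⟨y, _, hy1, hy2⟩
        exact disj1 y hy1 hy2
      · exact h
      · exfalso
        have hv : (Set.Ioo a d ∩ (SV1 ∩ (SU ∪ SV2))).Nonempty :=
          hpre SV1 (SU ∪ SV2) hSV1open (hSUopen.union hSV2open)
            (fun y hy => by rcases cover y hy with h' | h' | h'
                            · exact Or.inr (Or.inl h')
                            · exact Or.inl h'
                            · exact Or.inr (Or.inr h'))
            ⟨r0, hr0.1, hr0⟩ ⟨r, hr, Or.inr h⟩
        rcases hv with ⟨y, _, hy1, hy2⟩
        exact disj1 y hy1 hy2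
    exact notSV1all hor
  have hSV2empty : SV2 = ∅ := by
    by_contra hne
    rcases Set.nonempty_iff_ne_empty.2 hne with ⟨r0, hr0⟩
    have hor : Set.Ioo a d ⊆ SV2 := by
      intro r hr
      rcases cover r hr with h | h | h
      · exfalso
        have hv : (Set.Ioo a d ∩ (SV2 ∩ (SU ∪ SV1))).Nonempty :=
          hpre SV2 (SU ∪ SV1) hSV2open (hSUopen.union hSV1open)
            (fun y hy => by rcases cover y hy with h' | h' | h'
                            · exact Or.inr (Or.inl h')
                            · exact Or.inr (Or.inr h')
                            · exact Or.inl h')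
            ⟨r0, hr0.1, hr0⟩ ⟨r, hr, Or.inl h⟩
        rcases hv with ⟨y, _, hy1, hy2⟩
        exact disj2 y hy1 hy2
      · exfalso
        have hv : (Set.Ioo a d ∩ (SV2 ∩ (SU ∪ SV1))).Nonempty :=
          hpre SV2 (SU ∪ SV1) hSV2open (hSUopen.union hSV1open)
            (fun y hy => by rcases cover y hy with h' | h' | h'
                            · exact Or.inr (Or.inl h')
                            · exact Or.inr (Or.inr h')
                            · exact Or.inl h')
            ⟨r0, hr0.1, hr0⟩ ⟨r, hr, Or.inr h⟩
        rcases hv with ⟨y, _, hy1, hy2⟩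
        exact disj2 y hy1 hy2
      · exact h
    exact notSV2all hor
  -- conclude: b is order-between
  have hbSU : b ∈ SU := by
    rcases cover b ⟨hab, hbd⟩ with h | h | h
    · exact h
    · rw [hSV1empty] at h; exact absurd h (Set.notMem_empty b)
    · rw [hSV2empty] at h; exact absurd h (Set.notMem_empty b)
  rcases hbSU.2 with ⟨h1, h2⟩ | ⟨h1, h2⟩
  · exact le_trans (min_le_left _ _) (Lrel.chain hineq h1 h2)
  · have := Lrel.chain hineq h1 h2
    rw [norm_sub_rev (graphMap f d) (graphMap f b),
      norm_sub_rev (graphMap f d) (graphMap f a)] at this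
    exact le_trans (min_le_right _ _) this


theorem part1 (I : Set ℝ) (hI : I.OrdConnected) (f : ℝ → ℝ)
    (x : ℝ) (hx : x ∈ I) (hx' : ∃ z ∈ I, x < z) :
    aDiniSupR f I x ≤ diniSupR f I x := by
  obtain ⟨z₀, hz₀I, hxz₀⟩ := hx'
  have hIcc : Set.Icc x z₀ ⊆ I := hI.out hx hz₀I
  set δ₀ := z₀ - x with hδ₀def
  have hδ₀ : 0 < δ₀ := by simp [hδ₀def]; linarith
  have hIoosub : ∀ δ : ℝ, δ ≤ δ₀ → Set.Ioo x (x+δ) ⊆ I := by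
    intro δ hδ y hy
    exact hIcc ⟨hy.1.le, by have := hy.2; simp only [hδ₀def] at hδ ⊢; linarith⟩
  have haux : ∀ s : ℝ, diniSupR f I x < (s : EReal) →
      ((s : EReal) ∈ {t : EReal | ∃ s' : ℝ, t = (s' : EReal) ∧
      Tendsto (fun δ : ℝ =>
        volume {y | y ∈ Set.Ioo x (x + δ) ∩ I ∧ (f y - f x) / (y - x) ≤ s'} /
          ENNReal.ofReal δ)
      (nhdsWithin 0 (Set.Ioi 0)) (nhds 1)}) := by
    intro s hs
    have hev : ∀ᶠ y in nhdsWithin x (Set.Ioi x ∩ I),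
        (((f y - f x) / (y - x) : ℝ) : EReal) < (s : EReal) :=
      eventually_lt_of_limsup_lt hs
    rw [Filter.Eventually, Metric.mem_nhdsWithin_iff] at hev
    obtain ⟨ε, hε, hev⟩ := hev
    refine ⟨s, rfl, ?_⟩
    have hmain : ∀ δ : ℝ, 0 < δ → δ ≤ min ε δ₀ →
        {y | y ∈ Set.Ioo x (x + δ) ∩ I ∧ (f y - f x) / (y - x) ≤ s}
          = Set.Ioo x (x+δ) := by
      intro δ hδpos hδle
      ext y
      simp only [Set.mem_setOf_eq, Set.mem_inter_iff]
      constructor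
      · rintro ⟨⟨h1, _⟩, _⟩; exact h1
      · intro hy
        have hyI : y ∈ I := hIoosub δ (le_trans hδle (min_le_right _ _)) hy
        have hball : y ∈ Metric.ball x ε := by
          rw [Metric.mem_ball, Real.dist_eq, abs_of_pos (by linarith [hy.1] : (0:ℝ) < y - x)]
          have := hy.2
          have := min_le_left ε δ₀
          linarith [lt_of_lt_of_le hy.2 (by linarith [min_le_left ε δ₀] : x + δ ≤ x + ε)]
        have := hev ⟨hball, hy.1, hyI⟩
        rw [Set.mem_setOf_eq, EReal.coe_lt_coe_iff] at this
        exact ⟨⟨hy, hyI⟩, this.le⟩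
    have hevδ : ∀ᶠ δ in nhdsWithin (0:ℝ) (Set.Ioi 0),
        (volume {y | y ∈ Set.Ioo x (x + δ) ∩ I ∧ (f y - f x) / (y - x) ≤ s} /
          ENNReal.ofReal δ) = 1 := by
      have hmem : Set.Ioo (0:ℝ) (min ε δ₀) ∈ nhdsWithin (0:ℝ) (Set.Ioi 0) :=
        Ioo_mem_nhdsGT_of_mem ⟨le_refl _, lt_min hε hδ₀⟩
      filter_upwards [hmem] with δ hδ
      rw [hmain δ hδ.1 hδ.2.le, Real.volume_Ioo]
      simp only [add_sub_cancel_left]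
      exact ENNReal.div_self (by simp [ENNReal.ofReal_pos, hδ.1]) ENNReal.ofReal_ne_top
    exact Tendsto.congr' (EventuallyEq.symm hevδ) tendsto_const_nhds
  refine le_of_forall_gt_imp_ge_of_dense (fun a ha => ?_)
  induction a using EReal.rec with
  | bot => exact absurd ha (not_lt_bot)
  | coe s => exact sInf_le (haux s ha)
  | top => exact le_top


theorem part3 (I : Set ℝ) (hI : I.OrdConnected) (f : ℝ → ℝ) (hf : ContinuousOn f I)
    (hmono : MonotoneSet (graphMap f '' I)) (x : ℝ) (hx : x ∈ I) (hx' : ∃ z ∈ I, x < z) :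
    diniSupR f I x ≤ aDiniSupR f I x := by
  obtain ⟨z₀, hz₀I, hxz₀⟩ := hx'
  obtain ⟨c, hc, lt, _htrans, htri, hineq⟩ := hmono
  have hIcc : Set.Icc x z₀ ⊆ I := hI.out hx hz₀I
  set δ₀ := z₀ - x with hδ₀def
  have hδ₀ : 0 < δ₀ := by simp only [hδ₀def]; linarith
  have hIoosub : ∀ δ : ℝ, δ ≤ δ₀ → Set.Ioo x (x+δ) ⊆ I := by
    intro δ hδ y hy
    exact hIcc ⟨hy.1.le, by have := hy.2; simp only [hδ₀def] at hδ ⊢; linarith⟩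
  refine le_sInf ?_
  rintro b ⟨s, rfl, htend⟩
  -- reduce to: for every ε > 0, limsup ≤ s + ε
  have main : ∀ ε : ℝ, 0 < ε → diniSupR f I x ≤ ((s + ε : ℝ) : EReal) := by
    intro ε hε
    -- choose the scale parameter t
    set t := min (min (1/2) (ε/(4*(|s|+1)))) (ε/(8*(c+1))) with htdef
    have ht_pos : 0 < t := by
      refine lt_min (lt_min (by norm_num) (by positivity)) (by positivity)
    have ht_half : t ≤ 1/2 := le_trans (min_le_left _ _) (min_le_left _ _)
    have ht_s : t * (|s|+1) ≤ ε/4 := by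
      have h1 : t ≤ ε/(4*(|s|+1)) := le_trans (min_le_left _ _) (min_le_right _ _)
      have h2 : (0:ℝ) < 4*(|s|+1) := by positivity
      have h3 := (le_div_iff₀ h2).1 h1
      calc t * (|s|+1) = (t*(4*(|s|+1)))/4 := by ring
        _ ≤ ε/4 := by linarith
    have ht_c : t * (c+1) ≤ ε/8 := by
      have h1 : t ≤ ε/(8*(c+1)) := min_le_right _ _
      have h2 : (0:ℝ) < 8*(c+1) := by positivity
      have h3 := (le_div_iff₀ h2).1 h1
      calc t * (c+1) = (t*(8*(c+1)))/8 := by ring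
        _ ≤ ε/8 := by linarith
    clear_value t
    set ρ := t/4 with hρdef
    have hρ_pos : 0 < ρ := by rw [hρdef]; linarith
    clear_value ρ
    -- density hypothesis: eventually the ratio exceeds 1 - ρ
    have h1lt : (1:ℝ≥0∞) - ENNReal.ofReal ρ < 1 :=
      ENNReal.sub_lt_self ENNReal.one_ne_top one_ne_zero
        (by simpa [ENNReal.ofReal_pos] using hρ_pos)
    have hev2 := htend.eventually (eventually_gt_nhds h1lt)
    rw [Filter.Eventually, Metric.mem_nhdsWithin_iff] at hev2
    obtain ⟨δ₂, hδ₂pos, hδ₂⟩ := hev2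
    -- suppose not eventually small; find a bad point y
    by_contra hcon
    have hfreq : ¬ (∀ᶠ y in nhdsWithin x (Set.Ioi x ∩ I),
        (((f y - f x) / (y - x) : ℝ) : EReal) ≤ ((s + ε : ℝ) : EReal)) := by
      intro hev
      exact hcon (limsup_le_of_le (by isBoundedDefault) hev)
    rw [Filter.Eventually, Metric.mem_nhdsWithin_iff] at hfreq
    push_neg at hfreq
    have hns := hfreq (min (δ₂/2) (δ₀/2)) (by positivity)
    rw [Set.not_subset] at hns
    obtain ⟨y, hymem, hybad⟩ := hns
    obtain ⟨hyball, hyIoi, hyI⟩ := hymem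
    rw [Set.mem_setOf_eq, EReal.coe_le_coe_iff, not_le] at hybad
    set u := y - x with hudef
    have hu : 0 < u := by simp only [hudef]; exact sub_pos.2 hyIoi
    clear_value u
    have huη : u < min (δ₂/2) (δ₀/2) := by
      have := hyball
      rw [Metric.mem_ball, Real.dist_eq, abs_of_pos (by linarith : (0:ℝ) < y - x)] at this
      rw [hudef]
      exact this
    set δ := (1+t)*u with hδdef
    have hδpos : 0 < δ := by rw [hδdef]; exact mul_pos (by linarith) hu
    clear_value δ
    have hδltδ₂ : δ < δ₂ := by
      have h1 : u < δ₂/2 := lt_of_lt_of_le huη (min_le_left _ _)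
      have : δ ≤ 2*u := by
        simp only [hδdef]; nlinarith
      linarith
    have hδleδ₀ : δ ≤ δ₀ := by
      have h1 : u < δ₀/2 := lt_of_lt_of_le huη (min_le_right _ _)
      have : δ ≤ 2*u := by simp only [hδdef]; nlinarith
      linarith
    have hIset : Set.Ioo x (x+δ) ⊆ I := hIoosub δ hδleδ₀
    set goodset := {y' | y' ∈ Set.Ioo x (x + δ) ∩ I ∧ (f y' - f x) / (y' - x) ≤ s}
      with hgooddef
    have hratio : 1 - ENNReal.ofReal ρ < volume goodset / ENNReal.ofReal δ := by
      refine hδ₂ ⟨?_, hδpos⟩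
      rw [Metric.mem_ball, Real.dist_eq, sub_zero, abs_of_pos hδpos]
      exact hδltδ₂
    have hvol : (1 - ENNReal.ofReal ρ) * ENNReal.ofReal δ < volume goodset := by
      rw [ENNReal.lt_div_iff_mul_lt (Or.inl (by simpa [ENNReal.ofReal_pos] using hδpos))
        (Or.inl ENNReal.ofReal_ne_top)] at hratio
      exact hratio
    -- a sub-window of length t*u must meet the good set
    have hexists : ∀ p q : ℝ, x < p → p < q → q ≤ x + δ → q - p = t*u →
        (goodset ∩ Set.Ioo p q).Nonempty := by
      intro p q hp hpq hq hlen
      rw [Set.nonempty_iff_ne_empty]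
      intro hemp
      have hsub2 : goodset ⊆ Set.Ioo x (x+δ) \ Set.Ioo p q := by
        intro w hw
        refine ⟨hw.1.1, fun hmem => ?_⟩
        exact Set.eq_empty_iff_forall_notMem.1 hemp w ⟨hw, hmem⟩
      have hv1 : volume goodset ≤ volume (Set.Ioo x (x+δ) \ Set.Ioo p q) :=
        measure_mono hsub2
      have hioosub : Set.Ioo p q ⊆ Set.Ioo x (x+δ) :=
        Set.Ioo_subset_Ioo hp.le hq
      have hv2 : volume (Set.Ioo x (x+δ) \ Set.Ioo p q)
          = ENNReal.ofReal (x + δ - x) - ENNReal.ofReal (q - p) := by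
        rw [measure_diff hioosub measurableSet_Ioo.nullMeasurableSet
          (by rw [Real.volume_Ioo]; exact ENNReal.ofReal_ne_top), Real.volume_Ioo,
          Real.volume_Ioo]
      have hv3 : volume goodset ≤ ENNReal.ofReal (δ - t*u) := by
        have e2 : ENNReal.ofReal (x + δ - x) - ENNReal.ofReal (q - p)
            = ENNReal.ofReal (δ - t*u) := by
          rw [← ENNReal.ofReal_sub _ (by rw [hlen]; positivity : (0:ℝ) ≤ q - p)]
          congr 1
          rw [hlen]; ring
        rw [← e2]
        exact le_trans hv1 (le_of_eq hv2)
      have hle : ENNReal.ofReal (δ - t*u) ≤ (1 - ENNReal.ofReal ρ) * ENNReal.ofReal δ := by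
        have e1 : (1:ℝ≥0∞) - ENNReal.ofReal ρ = ENNReal.ofReal (1 - ρ) := by
          rw [ENNReal.ofReal_sub _ hρ_pos.le, ENNReal.ofReal_one]
        rw [e1, ← ENNReal.ofReal_mul (by simp only [hρdef]; linarith [ht_half, ht_pos])]
        apply ENNReal.ofReal_le_ofReal
        simp only [hδdef, hρdef]
        have hcalc : (1 - t/4)*((1+t)*u) - ((1+t)*u - t*u) = u*t*(3 - t)/4 := by ring
        have h3 : (0:ℝ) ≤ 3 - t := by linarith
        have h4 := mul_nonneg (mul_nonneg hu.le ht_pos.le) h3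
        linarith
      exact absurd (lt_of_lt_of_le hvol (le_trans hv3 hle)) (lt_irrefl _)
    -- pick good points on both sides of y
    have htu_pos : 0 < t*u := mul_pos ht_pos hu
    have htu_lt : t*u < u := by nlinarith
    have hyx : y = x + u := by simp only [hudef]; ring
    have hxδy : x + δ = y + t*u := by
      rw [hyx]; simp only [hδdef]; ring
    obtain ⟨z, hzgood, hzwin⟩ := hexists (y - t*u) y
      (by rw [hyx]; linarith) (by linarith) (by rw [hxδy]; linarith)
      (by ring)
    obtain ⟨z', hz'good, hz'win⟩ := hexists y (y + t*u)
      (by rw [hyx]; linarith) (by linarith) (le_of_eq hxδy.symm)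
      (by ring)
    -- unpack properties of z and z'
    have hzIoo : z ∈ Set.Ioo x (x+δ) := hzgood.1.1
    have hz'Ioo : z' ∈ Set.Ioo x (x+δ) := hz'good.1.1
    have hzx : 0 < z - x := sub_pos.2 hzIoo.1
    have hz'x : 0 < z' - x := sub_pos.2 hz'Ioo.1
    have hfz : f z - f x ≤ s*(z-x) := (div_le_iff₀ hzx).1 hzgood.2
    have hfz' : f z' - f x ≤ s*(z'-x) := (div_le_iff₀ hz'x).1 hz'good.2
    have hfy : (s+ε)*u < f y - f x := by
      exact (lt_div_iff₀ hu).1 hybad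
    have hz1 : y - t*u < z := hzwin.1
    have hz2 : z < y := hzwin.2
    have hz'1 : y < z' := hz'win.1
    have hz'2 : z' < y + t*u := hz'win.2
    -- height estimates
    have habs : -(|s|) ≤ s ∧ s ≤ |s| := ⟨neg_abs_le s, le_abs_self s⟩
    have hts' : t * |s| ≤ ε/4 := by
      have h9 : t*(|s|+1) = t*|s| + t := by ring
      linarith
    have h1 : ε*u*(1/2) < f y - f z := by
      have hzu : z - x = u - (y - z) := by simp only [hudef]; ring
      have hyz1 : 0 < y - z := by linarith
      have hyz2 : y - z < t*u := by linarith
      have hsb : s*(z-x) ≤ s*u + |s| * (t*u) := by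
        rw [hzu]
        have h3 : (-s)*(y-z) ≤ |s| * (y-z) :=
          mul_le_mul_of_nonneg_right (neg_le_abs s) hyz1.le
        have h4 : |s| * (y-z) ≤ |s| * (t*u) :=
          mul_le_mul_of_nonneg_left hyz2.le (abs_nonneg s)
        have h6 : s*(u - (y-z)) = s*u + (-s)*(y-z) := by ring
        linarith
      have hsb2 : |s| * (t*u) ≤ (ε/4)*u := by
        have h7 := mul_le_mul_of_nonneg_right hts' hu.le
        have h8 : |s| * (t*u) = t * |s| * u := by ring
        linarith
      have h9 : (s+ε)*u = s*u + ε*u := by ring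
      have h10 : 0 < ε*u := mul_pos hε hu
      linarith
    have h2 : ε*u*(1/2) < f y - f z' := by
      have hzu : z' - x = u + (z' - y) := by simp only [hudef]; ring
      have hyz1 : 0 < z' - y := by linarith
      have hyz2 : z' - y < t*u := by linarith
      have hsb : s*(z'-x) ≤ s*u + |s| * (t*u) := by
        rw [hzu]
        have h3 : s*(z'-y) ≤ |s| * (z'-y) :=
          mul_le_mul_of_nonneg_right (le_abs_self s) hyz1.le
        have h4 : |s| * (z'-y) ≤ |s| * (t*u) :=
          mul_le_mul_of_nonneg_left hyz2.le (abs_nonneg s)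
        have h6 : s*(u + (z'-y)) = s*u + s*(z'-y) := by ring
        linarith
      have hsb2 : |s| * (t*u) ≤ (ε/4)*u := by
        have h7 := mul_le_mul_of_nonneg_right hts' hu.le
        have h8 : |s| * (t*u) = t * |s| * u := by ring
        linarith
      have h9 : (s+ε)*u = s*u + ε*u := by ring
      have h10 : 0 < ε*u := mul_pos hε hu
      linarith
    -- intermediate value: equal-height points on both sides of y
    set hgt := f y - ε*u*(1/2) with hhdef
    clear_value hgt
    have hIccz : Set.Icc z y ⊆ I := by
      intro w hw
      exact hIset ⟨lt_of_lt_of_le hzIoo.1 hw.1, lt_of_le_of_lt hw.2 (by rw [hxδy]; linarith)⟩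
    have hIccz' : Set.Icc y z' ⊆ I := by
      intro w hw
      exact hIset ⟨lt_of_lt_of_le (by rw [hyx]; linarith : x < y) hw.1,
        lt_of_le_of_lt hw.2 hz'Ioo.2⟩
    have hmem1 : hgt ∈ Set.Icc (f z) (f y) := by
      constructor
      · have : 0 < ε*u*(1/2) := by positivity
        linarith
      · have : 0 < ε*u*(1/2) := by positivity
        linarith
    have hmem2 : hgt ∈ Set.Icc (f z') (f y) := by
      constructor
      · have : 0 < ε*u*(1/2) := by positivity
        linarith
      · have : 0 < ε*u*(1/2) := by positivity
        linarith
    obtain ⟨w₁, hw₁mem, hw₁eq⟩ := intermediate_value_Icc hz2.le (hf.mono hIccz) hmem1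
    obtain ⟨w₂, hw₂mem, hw₂eq⟩ := intermediate_value_Icc' hz'1.le (hf.mono hIccz') hmem2
    have hεu : 0 < ε*u*(1/2) := by positivity
    have hw₁y : w₁ < y := by
      rcases lt_or_eq_of_le hw₁mem.2 with h | h
      · exact h
      · exfalso; rw [h] at hw₁eq; rw [hw₁eq] at hhdef; linarith [hhdef]
    have hw₂y : y < w₂ := by
      rcases lt_or_eq_of_le hw₂mem.1 with h | h
      · exact h
      · exfalso; rw [← h] at hw₂eq; rw [hw₂eq] at hhdef; linarith [hhdef]
    have hw₁I : w₁ ∈ I := hIccz hw₁mem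
    have hw₂I : w₂ ∈ I := hIccz' hw₂mem
    -- apply the key geometric lemma
    have hkey := key_min f I hI hf c hc lt htri hineq hw₁I hw₂I hw₁y hw₂y
    have hlow1 : ε*u*(1/2) ≤ ‖graphMap f w₁ - graphMap f y‖ := by
      have := abs_snd_le f w₁ y
      rw [hw₁eq] at this
      rw [show hgt - f y = -(ε*u*(1/2)) by rw [hhdef]; ring, abs_neg,
        abs_of_pos hεu] at this
      exact this
    have hlow2 : ε*u*(1/2) ≤ ‖graphMap f y - graphMap f w₂‖ := by
      have := abs_snd_le f y w₂
      rw [hw₂eq] at this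
      rw [show f y - hgt = ε*u*(1/2) by rw [hhdef]; ring, abs_of_pos hεu] at this
      exact this
    have hup : ‖graphMap f w₁ - graphMap f w₂‖ ≤ 2*(t*u) := by
      have h3 := norm_graph_le f w₁ w₂
      rw [hw₁eq, hw₂eq, sub_self, abs_zero, add_zero] at h3
      have hw12 : |w₁ - w₂| ≤ 2*(t*u) := by
        rw [abs_le]
        constructor
        · have := hw₁mem.1; have := hw₂mem.2; linarith
        · have := hw₁mem.2; have := hw₂mem.1; linarith
      linarith
    have hfinal : ε*u*(1/2) ≤ c * (2*(t*u)) := by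
      have hmin : ε*u*(1/2) ≤ min ‖graphMap f w₁ - graphMap f y‖
          ‖graphMap f y - graphMap f w₂‖ := le_min hlow1 hlow2
      have := le_trans hmin hkey
      have hcm := mul_le_mul_of_nonneg_left hup hc.le
      linarith
    -- numeric contradiction
    have : c*(2*(t*u)) ≤ (ε/4)*u := by nlinarith
    nlinarith
  -- conclude limsup ≤ s from the ε-approximations
  by_contra hca
  push_neg at hca
  obtain ⟨r, hr1, hr2⟩ := EReal.exists_between_coe_real hca
  have hεr : (0:ℝ) < r - s := by
    rw [EReal.coe_lt_coe_iff] at hr1; linarith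
  have := main (r - s) hεr
  rw [show s + (r - s) = r by ring] at this
  exact absurd (lt_of_le_of_lt this hr2) (lt_irrefl _)

/-- If `f : I → ℝ` is continuous with a monotone graph, then at every point `x` of `I`
(which is not the right endpoint) the upper right approximate Dini derivative of `f`
equals the upper right Dini derivative of `f`. -/
theorem stmt_11 (I : Set ℝ) (hI : I.OrdConnected) (f : ℝ → ℝ) (hf : ContinuousOn f I)
    (hmono : MonotoneSet (graphMap f '' I)) (x : ℝ) (hx : x ∈ I) (hx' : ∃ z ∈ I, x < z) :
    aDiniSupR f I x = diniSupR f I x :=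
  le_antisymm (part1 I hI f x hx hx') (part3 I hI f hf hmono x hx hx')
end

section
/- There exists a continuous function f : [0,1] → ℝ with f(x) = |x − 1/2|^{3/2}·sin(1/(x − 1/2)) for x ≠ 1/2 and f(1/2) = 0, such that f is differentiable everywhere on [0,1] (hence every point is an M₁-point), but the graph of f is not monotone: condition P_c fails for every c > 0, i.e., for every c there exist x < y with f(x) = f(y) and max_{x ≤ t ≤ y}|f(x) − f(t)| > c|x − y|. -/
noncomputable def myf (x : ℝ) : ℝ := |x - 1/2| ^ ((3:ℝ)/2) * Real.sin (1/(x - 1/2))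

lemma myf_half : myf (1/2) = 0 := by simp [myf]

lemma myf_at (s : ℝ) : myf (1/2 + s) = |s| ^ ((3:ℝ)/2) * Real.sin (1/s) := by
  simp [myf]

lemma myf_diff_ne {x : ℝ} (hx : x ≠ 1/2) : DifferentiableAt ℝ myf x := by
  have h0 : x - 1/2 ≠ 0 := sub_ne_zero.2 hx
  have habs : DifferentiableAt ℝ (fun y : ℝ => |y - 1/2|) x := by
    have := (hasDerivAt_abs h0).comp x ((hasDerivAt_id x).sub_const (1/2))
    exact this.differentiableAt
  have h1 : DifferentiableAt ℝ (fun y : ℝ => |y - 1/2| ^ ((3:ℝ)/2)) x := by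
    apply DifferentiableAt.rpow_const habs
    left; simpa using abs_ne_zero.2 h0
  have h2 : DifferentiableAt ℝ (fun y : ℝ => Real.sin (1/(y - 1/2))) x := by
    apply Real.differentiableAt_sin.comp
    exact (differentiableAt_const 1).div ((differentiableAt_id.sub (differentiableAt_const _))) h0
  exact h1.mul h2

lemma myf_deriv_half : HasDerivAt myf 0 (1/2) := by
  rw [hasDerivAt_iff_tendsto]
  have key : ∀ x : ℝ, ‖x - 1/2‖⁻¹ * ‖myf x - myf (1/2) - (x - 1/2) • (0:ℝ)‖ ≤ |x - 1/2| ^ ((1:ℝ)/2) := by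
    intro x
    rcases eq_or_ne x (1/2) with h | h
    · simp [h]
    · have h0 : x - 1/2 ≠ 0 := sub_ne_zero.2 h
      have ha : (0:ℝ) < |x - 1/2| := abs_pos.2 h0
      rw [myf_half]
      simp only [smul_zero, sub_zero, Real.norm_eq_abs, myf, abs_mul,
        abs_abs, Real.abs_rpow_of_nonneg (abs_nonneg _)]
      have hsin : |Real.sin (1/(x - 1/2))| ≤ 1 := Real.abs_sin_le_one _
      calc |x - 1/2|⁻¹ * (|x - 1/2| ^ ((3:ℝ)/2) * |Real.sin (1/(x - 1/2))|)
          ≤ |x - 1/2|⁻¹ * (|x - 1/2| ^ ((3:ℝ)/2) * 1) := by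
            apply mul_le_mul_of_nonneg_left
            · exact mul_le_mul_of_nonneg_left hsin (Real.rpow_nonneg (abs_nonneg _) _)
            · positivity
        _ = |x - 1/2| ^ ((1:ℝ)/2) := by
            rw [mul_one, ← Real.rpow_neg_one |x - 1/2|, ← Real.rpow_add ha]
            norm_num
  have hg : Filter.Tendsto (fun x : ℝ => |x - 1/2| ^ ((1:ℝ)/2)) (nhds (1/2)) (nhds 0) := by
    have h1 : Filter.Tendsto (fun x : ℝ => |x - 1/2|) (nhds (1/2)) (nhds 0) := by
      have : Continuous (fun x : ℝ => |x - 1/2|) := (continuous_id.sub continuous_const).abs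
      simpa using this.tendsto (1/2)
    have h2 : Filter.Tendsto (fun y : ℝ => y ^ ((1:ℝ)/2)) (nhds 0) (nhds 0) := by
      have := (Real.continuousAt_rpow_const 0 (1/2) (Or.inr (by norm_num))).tendsto
      simpa [Real.zero_rpow (by norm_num : (1:ℝ)/2 ≠ 0)] using this
    exact h2.comp h1
  exact squeeze_zero (fun x => by positivity) key hg

lemma myf_diff : Differentiable ℝ myf := by
  intro x
  rcases eq_or_ne x (1/2) with h | h
  · rw [h]; exact myf_deriv_half.differentiableAt
  · exact myf_diff_ne h

lemma graph_dist (f : ℝ → ℝ) (s t : ℝ) :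
    ‖graphMap f s - graphMap f t‖ = Real.sqrt ((s - t)^2 + (f s - f t)^2) := by
  rw [EuclideanSpace.norm_eq]
  congr 1
  simp [graphMap, Fin.sum_univ_two, sq_abs]

lemma key_ineq (m a b gx gz : ℝ) (ha : 0 < a) (hb : 0 < b)
    (hgx : |gx| ≤ a/2) (hgz : |gz| ≤ b/2) :
    a^2 + (-(m*a) + gx)^2 ≤ (a+b)^2 + (-(m*(a+b)) + gx - gz)^2 := by
  have h1 : -(a/2) ≤ gx := neg_le_of_abs_le hgx
  have h2 : gx ≤ a/2 := le_of_abs_le hgx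
  have h3 : -(b/2) ≤ gz := neg_le_of_abs_le hgz
  have h4 : gz ≤ b/2 := le_of_abs_le hgz
  have habs : |gx * gz| ≤ a/2 * (b/2) := by
    rw [abs_mul]; exact mul_le_mul hgx hgz (abs_nonneg _) (by positivity)
  have hxz1 : gx * gz ≤ a/2 * (b/2) := le_of_abs_le habs
  have hxz2 : -(a/2 * (b/2)) ≤ gx * gz := neg_le_of_abs_le habs
  rcases le_or_gt 0 m with hm | hm
  · nlinarith [mul_nonneg (mul_nonneg hm hb.le) (by linarith : (0:ℝ) ≤ gz + b/2),
      mul_nonneg (mul_nonneg hm ha.le) (by linarith : (0:ℝ) ≤ gz + b/2),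
      mul_nonneg (mul_nonneg hm hb.le) (by linarith : (0:ℝ) ≤ a/2 - gx),
      mul_nonneg (by positivity : (0:ℝ) ≤ 2*a*b + b^2) (sq_nonneg (m - 1/2)),
      sq_nonneg (m*b + gz), mul_pos ha hb, sq_nonneg b]
  · nlinarith [mul_nonneg (mul_nonneg (by linarith : (0:ℝ) ≤ -m) hb.le) (by linarith : (0:ℝ) ≤ b/2 - gz),
      mul_nonneg (mul_nonneg (by linarith : (0:ℝ) ≤ -m) ha.le) (by linarith : (0:ℝ) ≤ b/2 - gz),
      mul_nonneg (mul_nonneg (by linarith : (0:ℝ) ≤ -m) hb.le) (by linarith : (0:ℝ) ≤ gx + a/2),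
      mul_nonneg (by positivity : (0:ℝ) ≤ 2*a*b + b^2) (sq_nonneg (m + 1/2)),
      sq_nonneg (m*b + gz), mul_pos ha hb, sq_nonneg b]

lemma M1_of_hasDerivAt {f : ℝ → ℝ} {y m : ℝ} (hd : HasDerivAt f m y) :
    ∃ ε > 0, ∀ x ∈ Set.Ioo (y - ε) y, ∀ z ∈ Set.Ioo y (y + ε),
      ‖graphMap f x - graphMap f y‖ ≤ ‖graphMap f x - graphMap f z‖ := by
  have hlo := (hasDerivAt_iff_isLittleO.1 hd).def (by norm_num : (0:ℝ) < 1/2)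
  rw [Metric.eventually_nhds_iff] at hlo
  obtain ⟨ε, hε, hB⟩ := hlo
  refine ⟨ε, hε, fun x hx z hz => ?_⟩
  set a := y - x with hadef
  set b := z - y with hbdef
  have ha : 0 < a := by simp only [hadef]; linarith [hx.2]
  have hb : 0 < b := by simp only [hbdef]; linarith [hz.1]
  set gx := f x - f y - (x - y) * m with hgxdef
  set gz := f z - f y - (z - y) * m with hgzdef
  have hgx : |gx| ≤ a / 2 := by
    have hd : dist x y < ε := by
      rw [Real.dist_eq, abs_of_neg (by linarith : x - y < 0)]; linarith [hx.1]
    have := hB hd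
    simp only [Real.norm_eq_abs, smul_eq_mul] at this
    calc |gx| ≤ 1/2 * |x - y| := by
          rw [hgxdef]; convert this using 3
      _ = a / 2 := by rw [abs_of_neg (by linarith : x - y < 0)]; ring
  have hgz : |gz| ≤ b / 2 := by
    have hd : dist z y < ε := by
      rw [Real.dist_eq, abs_of_pos (by linarith : (0:ℝ) < z - y)]; linarith [hz.2]
    have := hB hd
    simp only [Real.norm_eq_abs, smul_eq_mul] at this
    calc |gz| ≤ 1/2 * |z - y| := by
          rw [hgzdef]; convert this using 3
      _ = b / 2 := by rw [abs_of_pos (by linarith : (0:ℝ) < z - y)]; ring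
  rw [graph_dist, graph_dist]
  apply Real.sqrt_le_sqrt
  have key := key_ineq m a b gx gz ha hb hgx hgz
  have e1 : (x - y)^2 + (f x - f y)^2 = a^2 + (-(m*a) + gx)^2 := by
    rw [hgxdef, hadef]; ring
  have e2 : (x - z)^2 + (f x - f z)^2 = (a+b)^2 + (-(m*(a+b)) + gx - gz)^2 := by
    rw [hgxdef, hgzdef, hadef, hbdef]; ring
  rw [e1, e2]; exact key

lemma arith_key (c N : ℝ) (hπ : 0 < Real.pi) (hπ4 : Real.pi ≤ 4)
    (hN1 : 1 ≤ N) (hn : 8 * Real.pi * c^2 + 1 < N) :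
    c * ((N*Real.pi)⁻¹ - ((N+1)*Real.pi)⁻¹) < (((N+1/2)*Real.pi)⁻¹) ^ ((3:ℝ)/2) := by
  have hNpos : 0 < N := by linarith
  have hdiff : (N*Real.pi)⁻¹ - ((N+1)*Real.pi)⁻¹ = (N*(N+1)*Real.pi)⁻¹ := by
    field_simp; ring
  have hc2 : c^2 * Real.pi < N/8 := by nlinarith
  have hpow : ((((N+1/2)*Real.pi)⁻¹) ^ ((3:ℝ)/2))^(2:ℕ) = (((N+1/2)*Real.pi)⁻¹)^(3:ℕ) := by
    rw [← Real.rpow_natCast ((((N+1/2)*Real.pi)⁻¹) ^ ((3:ℝ)/2)) 2,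
      ← Real.rpow_mul (by positivity), ← Real.rpow_natCast (((N+1/2)*Real.pi)⁻¹) 3]
    norm_num
  apply lt_of_pow_lt_pow_left₀ 2 (Real.rpow_nonneg (by positivity) _)
  rw [hpow, hdiff]
  rw [mul_pow, inv_pow, inv_pow, ← div_eq_mul_inv, ← one_div (((N+1/2)*Real.pi)^3)]
  rw [div_lt_div_iff₀ (by positivity) (by positivity)]
  calc c^2 * ((N+1/2)*Real.pi)^3 = (c^2*Real.pi) * ((N+1/2)^3 * Real.pi^2) := by ring
    _ ≤ (N/8) * ((3/2*N)^3 * Real.pi^2) := by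
        apply mul_le_mul hc2.le _ (by positivity) (by positivity)
        apply mul_le_mul_of_nonneg_right _ (by positivity)
        apply pow_le_pow_left₀ (by linarith) (by linarith)
    _ = 27/64 * (N^4 * Real.pi^2) := by ring
    _ < 1 * (N*(N+1)*Real.pi)^2 := by
        have hstep : N^4 ≤ N^2*(N+1)^2 := by nlinarith
        have hP : (0:ℝ) < Real.pi^2 := pow_pos hπ 2
        have h1 : (N*(N+1)*Real.pi)^2 = N^2*(N+1)^2*Real.pi^2 := by ring
        have h2 : N^4*Real.pi^2 ≤ N^2*(N+1)^2*Real.pi^2 :=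
          mul_le_mul_of_nonneg_right hstep hP.le
        have h3 : (0:ℝ) < N^4*Real.pi^2 := by positivity
        rw [h1]; linarith

lemma partC (c : ℝ) (hc : 0 < c) :
    ∃ x ∈ Set.Icc (0:ℝ) 1, ∃ y ∈ Set.Icc (0:ℝ) 1,
      x < y ∧ myf x = myf y ∧ ∃ t ∈ Set.Icc x y, |myf x - myf t| > c * |x - y| := by
  obtain ⟨n, hn⟩ := exists_nat_gt (8 * Real.pi * c^2 + 1)
  have hπ := Real.pi_pos
  have hπ4 := Real.pi_le_four
  have hπ3 := Real.pi_gt_three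
  set N : ℝ := (n : ℝ) with hN
  have hN1 : 1 ≤ N := by
    have h : (1:ℝ) < N := lt_of_le_of_lt (by nlinarith) hn
    exact h.le
  have hNpos : 0 < N := by linarith
  set x := 1/2 + ((N+1)*Real.pi)⁻¹ with hx
  set y := 1/2 + (N*Real.pi)⁻¹ with hy
  set t := 1/2 + ((N+1/2)*Real.pi)⁻¹ with ht
  have hden1 : 0 < (N+1)*Real.pi := by positivity
  have hden2 : 0 < N*Real.pi := by nlinarith
  have hden3 : 0 < (N+1/2)*Real.pi := by nlinarith
  have hx01 : x ∈ Set.Icc (0:ℝ) 1 := by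
    constructor
    · have : (0:ℝ) < ((N+1)*Real.pi)⁻¹ := inv_pos.2 hden1
      simp only [hx]; linarith
    · have h2 : (2:ℝ) ≤ (N+1)*Real.pi := by nlinarith
      have : ((N+1)*Real.pi)⁻¹ ≤ 2⁻¹ := by
        apply inv_anti₀ (by norm_num) h2
      simp only [hx]; norm_num at this ⊢; linarith
  have hy01 : y ∈ Set.Icc (0:ℝ) 1 := by
    constructor
    · have : (0:ℝ) < (N*Real.pi)⁻¹ := inv_pos.2 hden2
      simp only [hy]; linarith
    · have h2 : (2:ℝ) ≤ N*Real.pi := by nlinarith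
      have : (N*Real.pi)⁻¹ ≤ 2⁻¹ := inv_anti₀ (by norm_num) h2
      simp only [hy]; norm_num at this ⊢; linarith
  have hxy : x < y := by
    have : (N*Real.pi)⁻¹ > ((N+1)*Real.pi)⁻¹ := by
      apply inv_strictAnti₀ hden2; nlinarith
    simp only [hx, hy]; linarith
  have hfx : myf x = 0 := by
    rw [hx, myf_at]
    have : 1/((N+1)*Real.pi)⁻¹ = ((n:ℝ)+1)*Real.pi := by
      rw [one_div, inv_inv]
    rw [this]
    have := Real.sin_nat_mul_pi (n+1)
    push_cast at this
    rw [this, mul_zero]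
  have hfy : myf y = 0 := by
    rw [hy, myf_at]
    have : 1/(N*Real.pi)⁻¹ = (n:ℝ)*Real.pi := by rw [one_div, inv_inv]
    rw [this, Real.sin_nat_mul_pi, mul_zero]
  have hft : |myf t| = (((N+1/2)*Real.pi)⁻¹) ^ ((3:ℝ)/2) := by
    rw [ht, myf_at]
    have h1 : 1/((N+1/2)*Real.pi)⁻¹ = (n:ℝ)*Real.pi + Real.pi/2 := by
      rw [one_div, inv_inv]; ring
    rw [h1, Real.sin_add_pi_div_two]
    have h2 : Real.cos ((n:ℝ)*Real.pi) = (-1)^n := by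
      have := Real.cos_nat_mul_pi_sub 0 n
      simpa using this
    have hs : (0:ℝ) < ((N+1/2)*Real.pi)⁻¹ := inv_pos.2 hden3
    rw [h2, abs_mul, abs_of_nonneg (Real.rpow_nonneg (abs_nonneg _) _), abs_of_pos hs]
    simp [abs_pow]
  have htx : x ≤ t := by
    have : ((N+1)*Real.pi)⁻¹ ≤ ((N+1/2)*Real.pi)⁻¹ := by
      apply inv_anti₀ hden3; nlinarith
    simp only [hx, ht]; linarith
  have hty : t ≤ y := by
    have : ((N+1/2)*Real.pi)⁻¹ ≤ (N*Real.pi)⁻¹ := by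
      apply inv_anti₀ hden2; nlinarith
    simp only [ht, hy]; linarith
  have hgoal := arith_key c N hπ hπ4 hN1 hn
  refine ⟨x, hx01, y, hy01, hxy, by rw [hfx, hfy], t, ⟨htx, hty⟩, ?_⟩
  rw [hfx, zero_sub, abs_neg, hft]
  have habsxy : |x - y| = (N*Real.pi)⁻¹ - ((N+1)*Real.pi)⁻¹ := by
    rw [abs_of_neg (by linarith : x - y < 0)]
    simp only [hx, hy]; ring
  rw [habsxy]
  exact hgoal

/-- There is a continuous function `f : [0,1] → ℝ`, namely
`f x = |x − 1/2|^{3/2}·sin(1/(x − 1/2))` for `x ≠ 1/2` and `f (1/2) = 0`, which is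
differentiable everywhere on `[0,1]` (hence every point of `[0,1]` is an `M₁`-point),
yet condition `P_c` fails for every `c > 0`: there are `x < y` in `[0,1]` with
`f x = f y` and `max_{x ≤ t ≤ y} |f x − f t| > c·|x − y|`.  In particular the graph of
`f` is not monotone. -/
theorem stmt_18 :
    ∃ f : ℝ → ℝ,
      (∀ x : ℝ, x ≠ 1 / 2 →
          f x = |x - 1 / 2| ^ ((3 : ℝ) / 2) * Real.sin (1 / (x - 1 / 2))) ∧
      f (1 / 2) = 0 ∧
      ContinuousOn f (Set.Icc 0 1) ∧
      (∀ x ∈ Set.Icc (0:ℝ) 1, DifferentiableWithinAt ℝ f (Set.Icc 0 1) x) ∧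
      (∀ y ∈ Set.Icc (0:ℝ) 1, ∃ ε > 0,
        ∀ x ∈ Set.Ioo (y - ε) y ∩ Set.Icc (0:ℝ) 1,
          ∀ z ∈ Set.Ioo y (y + ε) ∩ Set.Icc (0:ℝ) 1,
            ‖graphMap f x - graphMap f y‖ ≤ ‖graphMap f x - graphMap f z‖) ∧
      (∀ c : ℝ, 0 < c → ∃ x ∈ Set.Icc (0:ℝ) 1, ∃ y ∈ Set.Icc (0:ℝ) 1,
        x < y ∧ f x = f y ∧ ∃ t ∈ Set.Icc x y, |f x - f t| > c * |x - y|) := by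
  refine ⟨myf, fun x _ => rfl, myf_half, myf_diff.continuous.continuousOn,
    fun x _ => (myf_diff x).differentiableWithinAt, ?_, partC⟩
  intro y _
  obtain ⟨ε, hε, H⟩ := M1_of_hasDerivAt (myf_diff y).hasDerivAt
  exact ⟨ε, hε, fun x hx z hz => H x hx.1 z hz.1⟩
end
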